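/- arXiv:2305.01721 — 3 statements merged into one kernel-verified Lean document; each statement's English description precedes it below -/
import Mathlib

section
/- Let S be a decision rule system with d(S) = 1, i.e., every rule in S has length at most 1 and some rule has length 1. Then there exists an o-decision tree over S solving SR(S) with at most k(S) + 1 nodes, and there exists an e-decision tree over S solving ESR(S) with at most n(S)·(k(S) + 1) + 1 nodes; in particular, L_SR(S) ≤ k(S) + 1 and L_ESR(S) ≤ n(S)·(k(S) + 1) + 1. -/
/- Common formal framework for decision rule systems and decision trees /
   acyclic decision graphs, following Durdymyradov & Moshkov. -/

attribute [local instance] Classical.propDecidable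

noncomputable section

namespace DRS

/-- A decision rule `(a_{i₁}=δ₁) ∧ ⋯ ∧ (a_{i_m}=δ_m) → σ`:
`K` is the finite set of equations (attribute index, value), `rhs` is σ. -/
structure Rule where
  K : Finset (ℕ × ℕ)
  rhs : ℕ

/-- Well-formedness of a rule: the attributes on its left-hand side are pairwise different. -/
def Rule.WF (r : Rule) : Prop := ∀ p ∈ r.K, ∀ q ∈ r.K, p.1 = q.1 → p = q

/-- A(r): the set of attributes of a rule. -/
def Rule.attrs (r : Rule) : Finset ℕ := r.K.image Prod.fst

/-- The length m of a rule. -/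
def Rule.len (r : Rule) : ℕ := r.K.card

/-- A(S) -/
def attrs (S : Finset Rule) : Finset ℕ := S.biUnion Rule.attrs

/-- n(S) -/
def nPar (S : Finset Rule) : ℕ := (attrs S).card

/-- d(S): the maximum length of a rule of S. -/
def dPar (S : Finset Rule) : ℕ := S.sup Rule.len

/-- D(S): the set of right-hand sides. -/
def rhsSet (S : Finset Rule) : Finset ℕ := S.image Rule.rhs

/-- V_S(a_i) -/
def VS (S : Finset Rule) (i : ℕ) : Finset ℕ :=
  ((S.biUnion Rule.K).filter fun p => p.1 = i).image Prod.snd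

/-- k(S) -/
def kPar (S : Finset Rule) : ℕ := (attrs S).sup fun i => (VS S i).card

/-- Attribute values in trees are `Option ℕ`; `none` plays the role of the special value `*`.
`allowed S false i` is (the lift of) `V_S(a_i)`, and `allowed S true i` is `EV_S(a_i)`. -/
def allowed (S : Finset Rule) (ext : Bool) (i : ℕ) : Finset (Option ℕ) :=
  (VS S i).image some ∪ (if ext then {none} else ∅)

/-- Consistency of an equation system over ω ∪ {*}. -/
def ConsistentE (E : Finset (ℕ × Option ℕ)) : Prop :=
  ∀ p ∈ E, ∀ q ∈ E, p.1 = q.1 → p.2 = q.2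

/-- Lift the left-hand side of a rule to an equation system over ω ∪ {*}. -/
def liftK (K : Finset (ℕ × ℕ)) : Finset (ℕ × Option ℕ) :=
  K.image fun p => (p.1, some p.2)

/-- A finite directed labeled graph: the nodes are `0, …, n-1`, with a distinguished root,
each node carries either an attribute (working node) or a set of rules (terminal node),
and edges are labeled with elements of ω ∪ {*}. -/
structure DGraph where
  n : ℕ
  root : ℕ
  label : ℕ → ℕ ⊕ Finset Rule
  edges : Finset (ℕ × Option ℕ × ℕ)

namespace DGraph

def step (G : DGraph) (u v : ℕ) : Prop := ∃ l, (u, l, v) ∈ G.edges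

/-- The graph has no directed cycles. -/
def Acyclic (G : DGraph) : Prop := ∀ v, ¬ Relation.TransGen G.step v v

/-- A node is terminal if no edge leaves it. -/
def IsTerminal (G : DGraph) (v : ℕ) : Prop := ∀ e ∈ G.edges, e.1 ≠ v

/-- The set of rules attached to a (terminal) node. -/
def termSet (G : DGraph) (v : ℕ) : Finset Rule :=
  Sum.elim (fun _ => (∅ : Finset Rule)) id (G.label v)

/-- `G` is an acyclic decision graph over the rule system `S`;
`ext = false` : branching over `V_S` (o-type), `ext = true` : branching over `EV_S` (e-type).
Terminal nodes are labeled with subsets of S; each working node is labeled with an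
attribute `a` of `A(S)` and has exactly one leaving edge for every element of
`V_S(a)` (resp. `EV_S(a)`), the edges leaving it being labeled with these
pairwise different elements. -/
def IsDG (G : DGraph) (S : Finset Rule) (ext : Bool) : Prop :=
  G.root < G.n ∧
  (∀ e ∈ G.edges, e.1 < G.n ∧ e.2.2 < G.n) ∧
  G.Acyclic ∧
  (∀ v < G.n,
    if G.IsTerminal v then
      ∃ Z : Finset Rule, G.label v = Sum.inr Z ∧ Z ⊆ S
    else
      ∃ a : ℕ, G.label v = Sum.inl a ∧ a ∈ attrs S ∧
        (∀ l : Option ℕ, (∃ w, (v, l, w) ∈ G.edges) ↔ l ∈ allowed S ext a) ∧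
        (∀ l w w', (v, l, w) ∈ G.edges → (v, l, w') ∈ G.edges → w = w'))

/-- `G` is a finite directed tree with root: the root has no entering edge and every
other node has exactly one entering edge (together with acyclicity this makes the
graph a rooted tree). -/
def IsTree (G : DGraph) : Prop :=
  (∀ e ∈ G.edges, e.2.2 ≠ G.root) ∧
  (∀ v < G.n, v ≠ G.root → ∃! e, e ∈ G.edges ∧ e.2.2 = v)

/-- `chainFrom G v p t`: the list `p` of (node, leaving-edge-label) pairs forms a
directed path in `G` starting at `v` and ending at `t`. -/
def chainFrom (G : DGraph) : ℕ → List (ℕ × Option ℕ) → ℕ → Prop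
  | v, [], t => v = t
  | v, e :: rest, t => e.1 = v ∧ ∃ w, (v, e.2, w) ∈ G.edges ∧ chainFrom G w rest t

/-- A complete path: from the root to a terminal node; it is recorded by the list of
its working nodes with the labels of the edges taken, together with its terminal node. -/
def IsCompletePath (G : DGraph) (p : List (ℕ × Option ℕ)) (t : ℕ) : Prop :=
  G.chainFrom G.root p t ∧ G.IsTerminal t ∧ t < G.n

/-- K(ξ): the equation system associated with a complete path. -/
def pathEqs (G : DGraph) (p : List (ℕ × Option ℕ)) : Finset (ℕ × Option ℕ) :=
  (p.filterMap fun e =>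
    Sum.elim (fun a => some (a, e.2)) (fun _ => none) (G.label e.1)).toFinset

/-- L(Γ): the number of nodes. -/
def size (G : DGraph) : ℕ := G.n

/-- T(Γ): the number of terminal nodes labeled with pairwise different sets of rules. -/
def tCount (G : DGraph) : ℕ :=
  (((Finset.range G.n).filter fun v => G.IsTerminal v).image fun v => G.termSet v).card

/-- h(Γ): the maximum number of working nodes on a complete path. -/
def depth (G : DGraph) : ℕ :=
  sSup {m | ∃ p t, G.IsCompletePath p t ∧ p.length = m}

/-- Path conditions for (the solutions of) the problems All Rules / EAll Rules. -/
def SolvesAR (G : DGraph) (S : Finset Rule) : Prop :=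
  ∀ p t, G.IsCompletePath p t → ConsistentE (G.pathEqs p) →
    (∀ r ∈ G.termSet t, liftK r.K ⊆ G.pathEqs p) ∧
    (∀ r ∈ S, r ∉ G.termSet t → ¬ ConsistentE (liftK r.K ∪ G.pathEqs p))

/-- Path conditions for the problems All Decisions / EAll Decisions. -/
def SolvesAD (G : DGraph) (S : Finset Rule) : Prop :=
  ∀ p t, G.IsCompletePath p t → ConsistentE (G.pathEqs p) →
    (∀ r ∈ G.termSet t, liftK r.K ⊆ G.pathEqs p) ∧
    (∀ r ∈ S, r ∉ G.termSet t → r.rhs ∉ (G.termSet t).image Rule.rhs →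
      ¬ ConsistentE (liftK r.K ∪ G.pathEqs p))

/-- Path conditions for the problems Some Rules / ESome Rules. -/
def SolvesSR (G : DGraph) (S : Finset Rule) : Prop :=
  ∀ p t, G.IsCompletePath p t → ConsistentE (G.pathEqs p) →
    (∀ r ∈ G.termSet t, liftK r.K ⊆ G.pathEqs p) ∧
    (G.termSet t = ∅ → ∀ r ∈ S, ¬ ConsistentE (liftK r.K ∪ G.pathEqs p))

end DGraph

/-- Γ is a decision tree over S solving AR(S) (an o-tree). -/
def TreeSolvesAR (S : Finset Rule) (G : DGraph) : Prop :=
  G.IsDG S false ∧ G.IsTree ∧ G.SolvesAR S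
/-- Γ is a decision tree over S solving EAR(S) (an e-tree). -/
def TreeSolvesEAR (S : Finset Rule) (G : DGraph) : Prop :=
  G.IsDG S true ∧ G.IsTree ∧ G.SolvesAR S
/-- Γ is a decision tree over S solving AD(S) (an o-tree). -/
def TreeSolvesAD (S : Finset Rule) (G : DGraph) : Prop :=
  G.IsDG S false ∧ G.IsTree ∧ G.SolvesAD S
/-- Γ is a decision tree over S solving EAD(S) (an e-tree). -/
def TreeSolvesEAD (S : Finset Rule) (G : DGraph) : Prop :=
  G.IsDG S true ∧ G.IsTree ∧ G.SolvesAD S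
/-- Γ is a decision tree over S solving SR(S) (an o-tree). -/
def TreeSolvesSR (S : Finset Rule) (G : DGraph) : Prop :=
  G.IsDG S false ∧ G.IsTree ∧ G.SolvesSR S
/-- Γ is a decision tree over S solving ESR(S) (an e-tree). -/
def TreeSolvesESR (S : Finset Rule) (G : DGraph) : Prop :=
  G.IsDG S true ∧ G.IsTree ∧ G.SolvesSR S

/-- L_AR(S): minimum number of nodes of a decision tree over S solving AR(S). -/
def L_AR (S : Finset Rule) : ℕ := sInf {m | ∃ G : DGraph, TreeSolvesAR S G ∧ G.size = m}
def L_EAR (S : Finset Rule) : ℕ := sInf {m | ∃ G : DGraph, TreeSolvesEAR S G ∧ G.size = m}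
def L_AD (S : Finset Rule) : ℕ := sInf {m | ∃ G : DGraph, TreeSolvesAD S G ∧ G.size = m}
def L_EAD (S : Finset Rule) : ℕ := sInf {m | ∃ G : DGraph, TreeSolvesEAD S G ∧ G.size = m}
def L_SR (S : Finset Rule) : ℕ := sInf {m | ∃ G : DGraph, TreeSolvesSR S G ∧ G.size = m}
def L_ESR (S : Finset Rule) : ℕ := sInf {m | ∃ G : DGraph, TreeSolvesESR S G ∧ G.size = m}

/-- T_AR(S): minimum number of differently-labeled terminal nodes of a decision tree
over S solving AR(S); similarly for the other problems. -/
def T_AR (S : Finset Rule) : ℕ := sInf {m | ∃ G : DGraph, TreeSolvesAR S G ∧ G.tCount = m}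
def T_EAR (S : Finset Rule) : ℕ := sInf {m | ∃ G : DGraph, TreeSolvesEAR S G ∧ G.tCount = m}
def T_AD (S : Finset Rule) : ℕ := sInf {m | ∃ G : DGraph, TreeSolvesAD S G ∧ G.tCount = m}
def T_EAD (S : Finset Rule) : ℕ := sInf {m | ∃ G : DGraph, TreeSolvesEAD S G ∧ G.tCount = m}
def T_SR (S : Finset Rule) : ℕ := sInf {m | ∃ G : DGraph, TreeSolvesSR S G ∧ G.tCount = m}
def T_ESR (S : Finset Rule) : ℕ := sInf {m | ∃ G : DGraph, TreeSolvesESR S G ∧ G.tCount = m}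

/-- h_AR(S): minimum depth of a decision tree over S solving AR(S); similarly for the others. -/
def h_AR (S : Finset Rule) : ℕ := sInf {m | ∃ G : DGraph, TreeSolvesAR S G ∧ G.depth = m}
def h_EAR (S : Finset Rule) : ℕ := sInf {m | ∃ G : DGraph, TreeSolvesEAR S G ∧ G.depth = m}
def h_AD (S : Finset Rule) : ℕ := sInf {m | ∃ G : DGraph, TreeSolvesAD S G ∧ G.depth = m}
def h_EAD (S : Finset Rule) : ℕ := sInf {m | ∃ G : DGraph, TreeSolvesEAD S G ∧ G.depth = m}
def h_SR (S : Finset Rule) : ℕ := sInf {m | ∃ G : DGraph, TreeSolvesSR S G ∧ G.depth = m}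
def h_ESR (S : Finset Rule) : ℕ := sInf {m | ∃ G : DGraph, TreeSolvesESR S G ∧ G.depth = m}

/-- L^DG_SR(S): minimum number of nodes of an acyclic decision graph solving SR(S). -/
def LDG_SR (S : Finset Rule) : ℕ :=
  sInf {m | ∃ G : DGraph, G.IsDG S false ∧ G.SolvesSR S ∧ G.size = m}
/-- L^DG_ESR(S): minimum number of nodes of an acyclic decision graph solving ESR(S). -/
def LDG_ESR (S : Finset Rule) : ℕ :=
  sInf {m | ∃ G : DGraph, G.IsDG S true ∧ G.SolvesSR S ∧ G.size = m}

/-- A node cover of the hypergraph G(S). -/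
def IsNodeCover (S : Finset Rule) (B : Finset ℕ) : Prop :=
  B ⊆ attrs S ∧ ∀ r ∈ S, (Rule.attrs r).Nonempty → (Rule.attrs r ∩ B).Nonempty

/-- β(S): the minimum cardinality of a node cover of the hypergraph G(S). -/
def beta (S : Finset Rule) : ℕ := sInf {c | ∃ B, IsNodeCover S B ∧ B.card = c}

/-- S⁺: the subsystem of S consisting of all rules of length d(S). -/
def Splus (S : Finset Rule) : Finset Rule := S.filter fun r => r.len = dPar S

/-- β⁺(S) = β(S⁺). -/
def betaPlus (S : Finset Rule) : ℕ := beta (Splus S)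

/-- The rule r_α : delete from the left-hand side of r all equations belonging to α. -/
def Rule.restrict (r : Rule) (α : Finset (ℕ × Option ℕ)) : Rule :=
  ⟨r.K.filter fun p => (p.1, some p.2) ∉ α, r.rhs⟩

/-- S_α : the system of the rules r_α for all r ∈ S with K(r) ∪ α consistent. -/
def restrict (S : Finset Rule) (α : Finset (ℕ × Option ℕ)) : Finset Rule :=
  (S.filter fun r => ConsistentE (liftK r.K ∪ α)).image fun r => r.restrict α

/-- E_C(S): consistent equation systems whose attributes are in A(S) and whose
values belong to V_S (ext = false) resp. EV_S (ext = true). -/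
def ESys (S : Finset Rule) (ext : Bool) : Set (Finset (ℕ × Option ℕ)) :=
  {α | ConsistentE α ∧ ∀ p ∈ α, p.1 ∈ attrs S ∧ p.2 ∈ allowed S ext p.1}

/-- I_SR(S). -/
def I_SR (S : Finset Rule) : Finset Rule :=
  if ∃ r ∈ S, r.len = 0 then S.filter fun r => r.len = 0 else S

/-- D₀(S): the right-hand sides of the rules of S of length 0. -/
def D0 (S : Finset Rule) : Finset ℕ := (S.filter fun r => r.len = 0).image Rule.rhs

/-- I_AD(S). -/
def I_AD (S : Finset Rule) : Finset Rule :=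
  S.filter fun r => r.len = 0 ∨ r.rhs ∉ D0 S

def betaC (S : Finset Rule) (ext : Bool) : ℕ :=
  sSup {b | ∃ α ∈ ESys S ext, beta (restrict S α) = b}
def betaCplus (S : Finset Rule) (ext : Bool) : ℕ :=
  sSup {b | ∃ α ∈ ESys S ext, betaPlus (restrict S α) = b}
def betaI (S : Finset Rule) (I : Finset Rule → Finset Rule) : ℕ :=
  sSup {b | ∃ α ∈ ESys S true, beta (I (restrict S α)) = b}
def betaIplus (S : Finset Rule) (I : Finset Rule → Finset Rule) : ℕ :=
  sSup {b | ∃ α ∈ ESys S true, betaPlus (I (restrict S α)) = b}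

def beta_AR (S : Finset Rule) : ℕ := betaC S false
def beta_AD (S : Finset Rule) : ℕ := betaC S false
def beta_SR (S : Finset Rule) : ℕ := betaC S false
def beta_EAR (S : Finset Rule) : ℕ := betaC S true
def beta_ARplus (S : Finset Rule) : ℕ := betaCplus S false
def beta_ADplus (S : Finset Rule) : ℕ := betaCplus S false
def beta_SRplus (S : Finset Rule) : ℕ := betaCplus S false
def beta_EARplus (S : Finset Rule) : ℕ := betaCplus S true
def beta_EAD (S : Finset Rule) : ℕ := betaI S I_AD
def beta_EADplus (S : Finset Rule) : ℕ := betaIplus S I_AD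
def beta_ESR (S : Finset Rule) : ℕ := betaI S I_SR
def beta_ESRplus (S : Finset Rule) : ℕ := betaIplus S I_SR

/-- R_SR(S). -/
def R_SR (S : Finset Rule) : Finset Rule :=
  S.filter fun r => ¬ ∃ r' ∈ S, r'.K ⊂ r.K

/-- R_AD(S). -/
def R_AD (S : Finset Rule) : Finset Rule :=
  S.filter fun r => ¬ ∃ r' ∈ S, r'.K ⊂ r.K ∧ r'.rhs = r.rhs

/-- A reduced decision rule system. -/
def Reduced (S : Finset Rule) : Prop :=
  attrs S ⊆ Finset.range (nPar S + 1) ∧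
  rhsSet S ⊆ Finset.range ((rhsSet S).card + 1) ∧
  (∀ i ∈ attrs S, VS S i ⊆ Finset.range (kPar S + 1)) ∧
  1 ≤ dPar S

/-- Length of the binary representation of a natural number. -/
def bitLen (m : ℕ) : ℕ := max 1 (Nat.size m)

/-- The length of the word "(a⟨i⟩=⟨δ⟩)" encoding one equation. -/
def eqLen (p : ℕ × ℕ) : ℕ := 4 + bitLen p.1 + bitLen p.2

/-- The length of the word encoding one rule (with the "∧" signs and "→"). -/
def Rule.wordLen (r : Rule) : ℕ :=
  (∑ p ∈ r.K, eqLen p) + (r.K.card - 1) + 1 + bitLen r.rhs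

/-- size(S): the length of the word representing S (with ";" separating the rules). -/
def sizeS (S : Finset Rule) : ℕ := (∑ r ∈ S, r.wordLen) + (S.card - 1)
/-! ### Auxiliary lemmas -/

lemma mem_VS {S : Finset Rule} {i δ : ℕ} : δ ∈ VS S i ↔ ∃ r ∈ S, (i, δ) ∈ r.K := by
  simp only [VS, Finset.mem_image, Finset.mem_filter, Finset.mem_biUnion]
  constructor
  · rintro ⟨⟨x, y⟩, ⟨⟨r, hr, hK⟩, h1⟩, h2⟩
    subst h1; subst h2; exact ⟨r, hr, hK⟩
  · rintro ⟨r, hr, hK⟩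
    exact ⟨(i, δ), ⟨⟨r, hr, hK⟩, rfl⟩, rfl⟩

lemma mem_attrs {S : Finset Rule} {a : ℕ} : a ∈ attrs S ↔ ∃ r ∈ S, ∃ δ, (a, δ) ∈ r.K := by
  simp only [attrs, Rule.attrs, Finset.mem_biUnion, Finset.mem_image]
  constructor
  · rintro ⟨r, hr, ⟨x, y⟩, hK, h1⟩
    subst h1; exact ⟨r, hr, y, hK⟩
  · rintro ⟨r, hr, δ, hK⟩
    exact ⟨r, hr, (a, δ), hK, rfl⟩

lemma card_VS_le {S : Finset Rule} {a : ℕ} (h : a ∈ attrs S) : (VS S a).card ≤ kPar S :=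
  Finset.le_sup (f := fun i => (VS S i).card) h

lemma ruleK_singleton {S : Finset Rule} {r : Rule} {p : ℕ × ℕ}
    (hd : dPar S = 1) (hr : r ∈ S) (hp : p ∈ r.K) : r.K = {p} := by
  have h1 : r.K.card ≤ 1 := by
    have := Finset.le_sup (f := Rule.len) hr
    rw [← dPar, hd] at this; exact this
  have h2 : 1 ≤ r.K.card := Finset.card_pos.mpr ⟨p, hp⟩
  obtain ⟨q, hq⟩ := Finset.card_eq_one.mp (le_antisymm h1 h2)
  rw [hq] at hp ⊢
  simp at hp; subst hp; rfl

lemma transGen_lt {r : ℕ → ℕ → Prop} (h : ∀ u v, r u v → u < v) {u v : ℕ}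
    (ht : Relation.TransGen r u v) : u < v := by
  induction ht with
  | single h' => exact h _ _ h'
  | tail _ h' ih => exact ih.trans (h _ _ h')

lemma attrs_nonempty {S : Finset Rule} (hd : dPar S = 1) : (attrs S).Nonempty := by
  by_contra h
  rw [Finset.not_nonempty_iff_eq_empty] at h
  have : dPar S = 0 := by
    apply Nat.le_zero.mp
    apply Finset.sup_le
    intro r hr
    apply Nat.le_zero.mpr
    rw [Rule.len, Finset.card_eq_zero]
    by_contra hK
    obtain ⟨p, hp⟩ := Finset.nonempty_iff_ne_empty.mpr hK
    have : p.1 ∈ attrs S := mem_attrs.mpr ⟨r, hr, p.2, by simpa using hp⟩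
    simp [h] at this
  omega

/-! ### The o-tree for `d(S) = 1` -/

def oL (S : Finset Rule) (a : ℕ) : List ℕ := (VS S a).sort (· ≤ ·)

def oZ (S : Finset Rule) (a i : ℕ) : Finset Rule :=
  S.filter fun r => r.K ⊆ {(a, (oL S a).getD i 0)}

def oT (S : Finset Rule) (a : ℕ) : DGraph where
  n := (oL S a).length + 1
  root := 0
  label := fun v => if v = 0 then Sum.inl a else Sum.inr (oZ S a (v - 1))
  edges := (Finset.range (oL S a).length).image
    fun i => (0, some ((oL S a).getD i 0), i + 1)

lemma oT_mem_edges {S : Finset Rule} {a : ℕ} {e : ℕ × Option ℕ × ℕ} :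
    e ∈ (oT S a).edges ↔
      ∃ i < (oL S a).length, e = (0, some ((oL S a).getD i 0), i + 1) := by
  simp only [oT, Finset.mem_image, Finset.mem_range]
  constructor
  · rintro ⟨i, hi, rfl⟩; exact ⟨i, hi, rfl⟩
  · rintro ⟨i, hi, rfl⟩; exact ⟨i, hi, rfl⟩

lemma oT_solves {S : Finset Rule} {a : ℕ} (ha : a ∈ attrs S) (hd : dPar S = 1) :
    TreeSolvesSR S (oT S a) ∧ (oT S a).size ≤ kPar S + 1 := by
  set L := oL S a with hL
  have hlen : L.length = (VS S a).card := Finset.length_sort _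
  have hmemL : ∀ δ, δ ∈ L ↔ δ ∈ VS S a := fun δ => Finset.mem_sort _
  have hnodup : L.Nodup := Finset.sort_nodup _ _
  have hpos : 0 < L.length := by
    obtain ⟨r, hr, δ, hK⟩ := mem_attrs.mp ha
    have : δ ∈ L := (hmemL δ).mpr (mem_VS.mpr ⟨r, hr, hK⟩)
    exact List.length_pos_iff.mpr (List.ne_nil_of_mem this)
  -- terminality
  have hterm : ∀ v, v ≠ 0 → (oT S a).IsTerminal v := by
    intro v hv e he hne
    obtain ⟨i, hi, rfl⟩ := oT_mem_edges.mp he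
    exact hv (hne ▸ rfl)
  have hnterm : ¬ (oT S a).IsTerminal 0 := by
    intro h
    exact h (0, some (L.getD 0 0), 1) (oT_mem_edges.mpr ⟨0, hpos, rfl⟩) rfl
  -- Z is nonempty
  have hZne : ∀ i < L.length, (oZ S a i).Nonempty := by
    intro i hi
    have hδ : L.getD i 0 ∈ VS S a := by
      rw [← hmemL]
      rw [List.getD_eq_getElem L 0 hi]
      exact List.getElem_mem _
    obtain ⟨r, hr, hK⟩ := mem_VS.mp hδ
    refine ⟨r, Finset.mem_filter.mpr ⟨hr, ?_⟩⟩
    rw [ruleK_singleton hd hr hK]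
  have hIsDG : (oT S a).IsDG S false := by
    refine ⟨Nat.succ_pos _, ?_, ?_, ?_⟩
    · intro e he
      obtain ⟨i, hi, rfl⟩ := oT_mem_edges.mp he
      exact ⟨Nat.succ_pos _, by simp [oT]; omega⟩
    · intro v hv
      have := transGen_lt (r := (oT S a).step) ?_ hv
      · omega
      · rintro u w ⟨l, hl⟩
        obtain ⟨i, hi, he⟩ := oT_mem_edges.mp hl
        simp only [Prod.mk.injEq] at he
        omega
    · intro v hv
      rcases Nat.eq_zero_or_pos v with rfl | hvpos
      · rw [if_neg hnterm]
        refine ⟨a, by simp [oT], ha, ?_, ?_⟩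
        · intro l
          constructor
          · rintro ⟨w, hw⟩
            obtain ⟨i, hi, he⟩ := oT_mem_edges.mp hw
            simp only [Prod.mk.injEq] at he
            obtain ⟨-, hl, -⟩ := he
            have hv : L.getD i 0 ∈ VS S a := by
              rw [← hmemL, List.getD_eq_getElem L 0 hi]; exact List.getElem_mem _
            rw [hl]
            simp only [allowed, Bool.false_eq_true, if_false, Finset.union_empty,
              Finset.mem_image]
            exact ⟨_, hv, rfl⟩
          · intro hl
            simp only [allowed, Bool.false_eq_true, if_false, Finset.union_empty,
              Finset.mem_image] at hl
            obtain ⟨δ, hδ, rfl⟩ := hl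
            obtain ⟨i, hi, hget⟩ := List.mem_iff_getElem.mp ((hmemL δ).mpr hδ)
            exact ⟨i + 1, oT_mem_edges.mpr ⟨i, hi, by
              rw [List.getD_eq_getElem L 0 hi, hget]⟩⟩
        · intro l w w' hw hw'
          obtain ⟨i, hi, he⟩ := oT_mem_edges.mp hw
          obtain ⟨i', hi', he'⟩ := oT_mem_edges.mp hw'
          simp only [Prod.mk.injEq] at he he'
          obtain ⟨-, hl, rfl⟩ := he
          obtain ⟨-, hl', rfl⟩ := he'
          have : L.getD i 0 = L.getD i' 0 := by
            have h2 := hl.symm.trans hl'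
            injection h2
          rw [List.getD_eq_getElem L 0 hi, List.getD_eq_getElem L 0 hi'] at this
          have := (List.Nodup.getElem_inj_iff hnodup).mp this
          omega
      · rw [if_pos (hterm v (by omega))]
        exact ⟨oZ S a (v - 1), by simp [oT, DGraph.termSet, Nat.pos_iff_ne_zero.mp hvpos],
          Finset.filter_subset _ _⟩
  have hIsTree : (oT S a).IsTree := by
    constructor
    · intro e he
      obtain ⟨i, hi, rfl⟩ := oT_mem_edges.mp he
      simp [oT]
    · intro v hv hv0
      have hvpos : 0 < v := Nat.pos_of_ne_zero (by simpa [oT] using hv0)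
      have hvn : v < L.length + 1 := hv
      have hvlt : v - 1 < L.length := by omega
      have hv1 : v - 1 + 1 = v := Nat.succ_pred_eq_of_pos hvpos
      refine ⟨(0, some (L.getD (v - 1) 0), v - 1 + 1),
        ⟨oT_mem_edges.mpr ⟨v - 1, hvlt, rfl⟩, hv1⟩, ?_⟩
      rintro e ⟨he, hev⟩
      obtain ⟨i, hi, rfl⟩ := oT_mem_edges.mp he
      have hev' : i + 1 = v := hev
      have : i = v - 1 := by omega
      subst this
      rfl
  have hSolves : (oT S a).SolvesSR S := by
    rintro p t ⟨hchain, hterm', hlt⟩ hcons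
    match p with
    | [] =>
      simp only [DGraph.chainFrom] at hchain
      rw [show (oT S a).root = 0 from rfl] at hchain
      exact absurd (hchain ▸ hterm') hnterm
    | e :: rest =>
      obtain ⟨he1, w, hw, hrest⟩ := hchain
      obtain ⟨i, hi, hee⟩ := oT_mem_edges.mp hw
      simp only [Prod.mk.injEq] at hee
      obtain ⟨-, hl, rfl⟩ := hee
      match rest with
      | (e' :: rest') =>
        obtain ⟨he'1, w', hw', -⟩ := hrest
        obtain ⟨i', hi', hee'⟩ := oT_mem_edges.mp hw'
        simp only [Prod.mk.injEq] at hee'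
        omega
      | [] =>
        simp only [DGraph.chainFrom] at hrest
        subst hrest
        have hpe : (oT S a).pathEqs [e] = {(a, some (L.getD i 0))} := by
          have : (oT S a).label e.1 = Sum.inl a := by
            rw [he1]; rfl
          simp [DGraph.pathEqs, this, hl, hL]
        have hts : (oT S a).termSet (i + 1) = oZ S a i := by
          simp [DGraph.termSet, oT]
        rw [hts, hpe]
        constructor
        · intro r hr
          simp only [oZ, Finset.mem_filter] at hr
          intro q hq
          simp only [liftK, Finset.mem_image] at hq
          obtain ⟨pp, hpp, rfl⟩ := hq
          have := hr.2 hpp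
          simp only [Finset.mem_singleton] at this
          subst this
          simp [hL]
        · intro hempty
          exact absurd hempty (Finset.nonempty_iff_ne_empty.mp (hZne i hi))
  refine ⟨⟨hIsDG, hIsTree, hSolves⟩, ?_⟩
  show L.length + 1 ≤ kPar S + 1
  rw [hlen]
  exact Nat.add_le_add_right (card_VS_le ha) 1

/-! ### The e-tree for `d(S) = 1` -/

def eM (S : Finset Rule) : List ℕ := (attrs S).sort (· ≤ ·)
def eN (S : Finset Rule) : ℕ := (eM S).length
def Ma (S : Finset Rule) (j : ℕ) : ℕ := (eM S).getD j 0
def eL (S : Finset Rule) (j : ℕ) : List ℕ := (VS S (Ma S j)).sort (· ≤ ·)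
def ec (S : Finset Rule) (j : ℕ) : ℕ := (eL S j).length
def eo (S : Finset Rule) (j : ℕ) : ℕ := ∑ x ∈ Finset.range j, (1 + ec S x)
def jOf (S : Finset Rule) (v : ℕ) : ℕ := Nat.findGreatest (fun j => eo S j ≤ v) (eN S)
def eZt (S : Finset Rule) (j i : ℕ) : Finset Rule :=
  S.filter fun r => r.K ⊆ {(Ma S j, (eL S j).getD i 0)}
def eZf (S : Finset Rule) : Finset Rule := S.filter fun r => r.K = ∅

def eT (S : Finset Rule) : DGraph where
  n := eo S (eN S) + 1
  root := 0
  label := fun v =>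
    if v = eo S (eN S) then Sum.inr (eZf S)
    else if v = eo S (jOf S v) then Sum.inl (Ma S (jOf S v))
    else Sum.inr (eZt S (jOf S v) (v - eo S (jOf S v) - 1))
  edges := (Finset.range (eN S)).biUnion fun j =>
    insert (eo S j, (none : Option ℕ), eo S (j + 1))
      ((Finset.range (ec S j)).image fun i =>
        (eo S j, some ((eL S j).getD i 0), eo S j + 1 + i))

section ETree
variable {S : Finset Rule}

lemma eo_succ (j : ℕ) : eo S (j + 1) = eo S j + 1 + ec S j := by
  rw [eo, Finset.sum_range_succ]; rw [eo]; ring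

lemma eo_zero : eo S 0 = 0 := rfl

lemma eo_strictMono : StrictMono (eo S) := by
  apply strictMono_nat_of_lt_succ
  intro j
  rw [eo_succ]
  omega

lemma eo_mono : Monotone (eo S) := eo_strictMono.monotone

lemma Ma_mem (j : ℕ) (hj : j < eN S) : Ma S j ∈ attrs S := by
  rw [← Finset.mem_sort (α := ℕ) (· ≤ ·), ← eM]
  rw [Ma, List.getD_eq_getElem _ 0 hj]
  exact List.getElem_mem _

lemma ec_le (j : ℕ) (hj : j < eN S) : ec S j ≤ kPar S := by
  rw [ec, eL, Finset.length_sort]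
  exact card_VS_le (Ma_mem j hj)

lemma termId_lt {j i : ℕ} (hi : i < ec S j) : eo S j + 1 + i < eo S (j + 1) := by
  rw [eo_succ]; omega

lemma termId_ne_eo {j i : ℕ} (hi : i < ec S j) (j' : ℕ) : eo S j + 1 + i ≠ eo S j' := by
  intro h
  rcases le_or_gt j' j with h' | h'
  · have := eo_mono (S := S) h'
    omega
  · have := eo_mono (S := S) h'
    rw [eo_succ] at this
    omega

lemma termId_inj {j i j' i' : ℕ} (hi : i < ec S j) (hi' : i' < ec S j')
    (h : eo S j + 1 + i = eo S j' + 1 + i') : j = j' ∧ i = i' := by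
  rcases lt_trichotomy j j' with hlt | heq | hgt
  · have h1 := termId_lt hi
    have h2 : eo S (j + 1) ≤ eo S j' := eo_mono (S := S) hlt
    omega
  · subst heq
    omega
  · have h1 := termId_lt hi'
    have h2 : eo S (j' + 1) ≤ eo S j := eo_mono (S := S) hgt
    omega

lemma jOf_eo {j : ℕ} (hj : j ≤ eN S) : jOf S (eo S j) = j := by
  rw [jOf, Nat.findGreatest_eq_iff]
  refine ⟨hj, fun _ => le_rfl, ?_⟩
  intro n hn _ hle
  exact absurd hle (not_le.mpr (eo_strictMono hn))

lemma jOf_term {j i : ℕ} (hj : j < eN S) (hi : i < ec S j) :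
    jOf S (eo S j + 1 + i) = j := by
  rw [jOf, Nat.findGreatest_eq_iff]
  refine ⟨le_of_lt hj, fun _ => by omega, ?_⟩
  intro n hn _ hle
  have h4 : eo S (j + 1) ≤ eo S n := eo_mono (S := S) hn
  have := termId_lt hi
  omega

lemma label_fin : (eT S).label (eo S (eN S)) = Sum.inr (eZf S) := by
  simp [eT]

lemma label_work {j : ℕ} (hj : j < eN S) : (eT S).label (eo S j) = Sum.inl (Ma S j) := by
  have h1 : eo S j ≠ eo S (eN S) := fun h => absurd (eo_strictMono.injective h) (by omega)
  have h2 := jOf_eo (S := S) (le_of_lt hj)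
  simp [eT, if_neg h1, h2]

lemma label_term {j i : ℕ} (hj : j < eN S) (hi : i < ec S j) :
    (eT S).label (eo S j + 1 + i) = Sum.inr (eZt S j i) := by
  have h1 : eo S j + 1 + i ≠ eo S (eN S) := termId_ne_eo hi _
  have h2 := jOf_term hj hi
  have h3 : eo S j + 1 + i ≠ eo S j := by omega
  simp only [eT, if_neg h1, h2, if_neg h3]
  congr 1
  congr 1
  omega

lemma mem_eT_edges {e : ℕ × Option ℕ × ℕ} :
    e ∈ (eT S).edges ↔ ∃ j < eN S,
      (e = (eo S j, none, eo S (j + 1)) ∨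
        ∃ i < ec S j, e = (eo S j, some ((eL S j).getD i 0), eo S j + 1 + i)) := by
  simp only [eT, Finset.mem_biUnion, Finset.mem_range, Finset.mem_insert, Finset.mem_image]
  constructor
  · rintro ⟨j, hj, h | ⟨i, hi, h⟩⟩
    · exact ⟨j, hj, Or.inl h⟩
    · exact ⟨j, hj, Or.inr ⟨i, hi, h.symm⟩⟩
  · rintro ⟨j, hj, h | ⟨i, hi, h⟩⟩
    · exact ⟨j, hj, Or.inl h⟩
    · exact ⟨j, hj, Or.inr ⟨i, hi, h.symm⟩⟩

lemma eT_edge_lt {e : ℕ × Option ℕ × ℕ} (he : e ∈ (eT S).edges) : e.1 < e.2.2 := by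
  obtain ⟨j, hj, h | ⟨i, hi, h⟩⟩ := mem_eT_edges.mp he
  · subst h; exact eo_strictMono (by omega)
  · subst h; simp; omega

lemma eT_term_fin : (eT S).IsTerminal (eo S (eN S)) := by
  intro e he hne
  obtain ⟨j, hj, h | ⟨i, hi, h⟩⟩ := mem_eT_edges.mp he
  all_goals subst h
  all_goals exact absurd (eo_strictMono.injective hne) (by omega)

lemma eT_term_term {j i : ℕ} (hi : i < ec S j) : (eT S).IsTerminal (eo S j + 1 + i) := by
  intro e he hne
  obtain ⟨j', hj', h | ⟨i', hi', h⟩⟩ := mem_eT_edges.mp he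
  all_goals subst h
  all_goals exact termId_ne_eo hi j' hne.symm

lemma eT_not_term_work {j : ℕ} (hj : j < eN S) : ¬ (eT S).IsTerminal (eo S j) := fun h =>
  h (eo S j, none, eo S (j + 1)) (mem_eT_edges.mpr ⟨j, hj, Or.inl rfl⟩) rfl

lemma eT_decode {v : ℕ} (hv : v ≤ eo S (eN S)) :
    v = eo S (eN S) ∨ (∃ j < eN S, v = eo S j) ∨
      (∃ j < eN S, ∃ i < ec S j, v = eo S j + 1 + i) := by
  set j := jOf S v with hj
  have hle : eo S j ≤ v := by
    rw [hj, jOf]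
    exact Nat.findGreatest_spec (P := fun j => eo S j ≤ v) (Nat.zero_le _)
      (by show eo S 0 ≤ v; rw [eo_zero]; exact Nat.zero_le v)
  have hjN : j ≤ eN S := by rw [hj, jOf]; exact Nat.findGreatest_le _
  rcases eq_or_lt_of_le hjN with heqN | hjlt
  · left; have := eo_mono (S := S) (le_of_eq heqN.symm); omega
  · have hub : v < eo S (j + 1) := by
      by_contra h
      have h2 : j + 1 ≤ jOf S v := by
        rw [jOf]; exact Nat.le_findGreatest hjlt (not_lt.mp h)
      omega
    rcases eq_or_lt_of_le hle with heq | hlt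
    · exact Or.inr (Or.inl ⟨j, hjlt, heq.symm⟩)
    · refine Or.inr (Or.inr ⟨j, hjlt, v - eo S j - 1, ?_, by omega⟩)
      rw [eo_succ] at hub
      omega

lemma eT_edge_src {u : ℕ} {l : Option ℕ} {w : ℕ} (h : (u, l, w) ∈ (eT S).edges) :
    ∃ j < eN S, u = eo S j := by
  obtain ⟨j, hj, hh | ⟨i, hi, hh⟩⟩ := mem_eT_edges.mp h <;>
    (simp only [Prod.mk.injEq] at hh; exact ⟨j, hj, hh.1⟩)

lemma eT_IsDG : (eT S).IsDG S true := by
  have hnodupM : (eM S).Nodup := Finset.sort_nodup _ _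
  refine ⟨Nat.succ_pos _, ?_, ?_, ?_⟩
  · intro e he
    obtain ⟨j, hj, h | ⟨i, hi, h⟩⟩ := mem_eT_edges.mp he
    · subst h
      have h1 : eo S j ≤ eo S (eN S) := eo_mono (S := S) (le_of_lt hj)
      have h2 : eo S (j + 1) ≤ eo S (eN S) := eo_mono (S := S) hj
      exact ⟨by show eo S j < eo S (eN S) + 1; omega,
        by show eo S (j + 1) < eo S (eN S) + 1; omega⟩
    · subst h
      have h1 : eo S j ≤ eo S (eN S) := eo_mono (S := S) (le_of_lt hj)
      have h2 : eo S (j + 1) ≤ eo S (eN S) := eo_mono (S := S) hj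
      have h3 := termId_lt hi
      exact ⟨by show eo S j < eo S (eN S) + 1; omega,
        by show eo S j + 1 + i < eo S (eN S) + 1; omega⟩
  · intro v hv
    have := transGen_lt (r := (eT S).step) ?_ hv
    · omega
    · rintro u w ⟨l, hl⟩
      exact eT_edge_lt hl
  · intro v hv
    have hv' : v ≤ eo S (eN S) := by
      have : v < eo S (eN S) + 1 := hv
      omega
    rcases eT_decode hv' with hfin | ⟨j, hj, rfl⟩ | ⟨j, hj, i, hi, rfl⟩
    · subst hfin
      rw [if_pos eT_term_fin]
      exact ⟨eZf S, label_fin, Finset.filter_subset _ _⟩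
    · rw [if_neg (eT_not_term_work hj)]
      refine ⟨Ma S j, label_work hj, Ma_mem j hj, ?_, ?_⟩
      · intro l
        constructor
        · rintro ⟨w, hw⟩
          obtain ⟨j', hj', h | ⟨i, hi, h⟩⟩ := mem_eT_edges.mp hw
          · simp only [Prod.mk.injEq] at h
            rw [h.2.1]
            simp [allowed]
          · simp only [Prod.mk.injEq] at h
            obtain ⟨h1, h2, h3⟩ := h
            obtain rfl : j = j' := eo_strictMono.injective h1
            rw [h2]
            have hmem : (eL S j).getD i 0 ∈ VS S (Ma S j) := by
              rw [← Finset.mem_sort (α := ℕ) (· ≤ ·), ← eL,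
                List.getD_eq_getElem _ 0 (show i < (eL S j).length from hi)]
              exact List.getElem_mem _
            simp only [allowed, Finset.mem_union, Finset.mem_image]
            exact Or.inl ⟨_, hmem, rfl⟩
        · intro hl
          simp only [allowed, if_true, if_pos trivial, Finset.mem_union, Finset.mem_image,
            Finset.mem_singleton] at hl
          rcases hl with ⟨δ, hδ, rfl⟩ | rfl
          · have hδL : δ ∈ eL S j := (Finset.mem_sort (α := ℕ) (· ≤ ·)).mpr hδ
            obtain ⟨i, hi, hget⟩ := List.mem_iff_getElem.mp hδL
            refine ⟨eo S j + 1 + i, mem_eT_edges.mpr ⟨j, hj, Or.inr ⟨i, hi, ?_⟩⟩⟩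
            rw [List.getD_eq_getElem _ 0 hi, hget]
          · exact ⟨eo S (j + 1), mem_eT_edges.mpr ⟨j, hj, Or.inl rfl⟩⟩
      · intro l w w' hw hw'
        have hnodupL : (eL S j).Nodup := Finset.sort_nodup _ _
        obtain ⟨j1, hj1, h | ⟨i1, hi1, h⟩⟩ := mem_eT_edges.mp hw <;>
          obtain ⟨j2, hj2, h' | ⟨i2, hi2, h'⟩⟩ := mem_eT_edges.mp hw' <;>
          simp only [Prod.mk.injEq] at h h'
        · obtain rfl : j = j1 := eo_strictMono.injective h.1
          obtain rfl : j = j2 := eo_strictMono.injective h'.1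
          rw [h.2.2, h'.2.2]
        · obtain rfl : j = j1 := eo_strictMono.injective h.1
          rw [h.2.1] at h'
          exact absurd h'.2.1.symm (by simp)
        · obtain rfl : j = j2 := eo_strictMono.injective h'.1
          rw [h'.2.1] at h
          exact absurd h.2.1.symm (by simp)
        · obtain rfl : j = j1 := eo_strictMono.injective h.1
          obtain rfl : j = j2 := eo_strictMono.injective h'.1
          have hll : some ((eL S j).getD i1 0) = some ((eL S j).getD i2 0) :=
            h.2.1.symm.trans h'.2.1
          have hgg : (eL S j).getD i1 0 = (eL S j).getD i2 0 := by injection hll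
          rw [List.getD_eq_getElem _ 0 hi1, List.getD_eq_getElem _ 0 hi2] at hgg
          obtain rfl : i1 = i2 := (List.Nodup.getElem_inj_iff hnodupL).mp hgg
          rw [h.2.2, h'.2.2]
    · rw [if_pos (eT_term_term hi)]
      exact ⟨eZt S j i, label_term hj hi, Finset.filter_subset _ _⟩

lemma eT_unique_in_eo {m : ℕ} (hm1 : 1 ≤ m) (hm2 : m ≤ eN S) :
    ∃! e, e ∈ (eT S).edges ∧ e.2.2 = eo S m := by
  have hm : m - 1 < eN S := by omega
  have hms : m - 1 + 1 = m := by omega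
  refine ⟨(eo S (m - 1), none, eo S (m - 1 + 1)),
    ⟨mem_eT_edges.mpr ⟨m - 1, hm, Or.inl rfl⟩, by rw [hms]⟩, ?_⟩
  rintro e ⟨he, hev⟩
  obtain ⟨j', hj', h | ⟨i', hi', h⟩⟩ := mem_eT_edges.mp he
  · subst h
    have hev' : eo S (j' + 1) = eo S m := hev
    have : j' + 1 = m := eo_strictMono.injective hev'
    obtain rfl : j' = m - 1 := by omega
    rfl
  · subst h
    have hev' : eo S j' + 1 + i' = eo S m := hev
    exact absurd hev' (termId_ne_eo hi' m)

lemma eT_IsTree : (eT S).IsTree := by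
  constructor
  · intro e he hc
    have h1 := eT_edge_lt he
    have h2 : e.2.2 = 0 := hc
    omega
  · intro v hv hv0
    have hv' : v ≤ eo S (eN S) := by
      have : v < eo S (eN S) + 1 := hv
      omega
    have hv00 : v ≠ 0 := hv0
    rcases eT_decode hv' with hfin | ⟨j, hj, rfl⟩ | ⟨j, hj, i, hi, rfl⟩
    · subst hfin
      have hN1 : 1 ≤ eN S := by
        by_contra h
        have : eN S = 0 := by omega
        rw [this, eo_zero] at hv00
        exact hv00 rfl
      exact eT_unique_in_eo hN1 le_rfl
    · have hj1 : 1 ≤ j := by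
        by_contra h
        have : j = 0 := by omega
        rw [this, eo_zero] at hv00
        exact hv00 rfl
      exact eT_unique_in_eo hj1 (le_of_lt hj)
    · refine ⟨(eo S j, some ((eL S j).getD i 0), eo S j + 1 + i),
        ⟨mem_eT_edges.mpr ⟨j, hj, Or.inr ⟨i, hi, rfl⟩⟩, rfl⟩, ?_⟩
      rintro e ⟨he, hev⟩
      obtain ⟨j', hj', h | ⟨i', hi', h⟩⟩ := mem_eT_edges.mp he
      · subst h
        have hev' : eo S (j' + 1) = eo S j + 1 + i := hev
        exact absurd hev'.symm (termId_ne_eo hi (j' + 1))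
      · subst h
        have hev' : eo S j' + 1 + i' = eo S j + 1 + i := hev
        obtain ⟨rfl, rfl⟩ := termId_inj hi' hi hev'
        rfl

lemma eT_chain {t : ℕ} (p : List (ℕ × Option ℕ)) (j : ℕ) (hj : j ≤ eN S)
    (hc : (eT S).chainFrom (eo S j) p t) (ht : (eT S).IsTerminal t) :
    ((eT S).pathEqs p = (Finset.Ico j (eN S)).image (fun x => (Ma S x, (none : Option ℕ)))
        ∧ t = eo S (eN S)) ∨
      (∃ j' i, j ≤ j' ∧ j' < eN S ∧ i < ec S j' ∧
        (eT S).pathEqs p = insert (Ma S j', some ((eL S j').getD i 0))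
          ((Finset.Ico j j').image fun x => (Ma S x, (none : Option ℕ))) ∧
        t = eo S j' + 1 + i) := by
  induction p generalizing j with
  | nil =>
    have hjt : eo S j = t := hc
    rcases eq_or_lt_of_le hj with rfl | hlt
    · left
      refine ⟨?_, hjt.symm⟩
      simp [DGraph.pathEqs, Finset.Ico_self]
    · exact absurd (hjt ▸ ht) (eT_not_term_work hlt)
  | cons e rest ih =>
    obtain ⟨he1, w, hw, hrest⟩ := hc
    obtain ⟨j', hj', h | ⟨i, hi, h⟩⟩ := mem_eT_edges.mp hw
    · simp only [Prod.mk.injEq] at h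
      obtain ⟨h1, h2, h3⟩ := h
      obtain rfl : j = j' := eo_strictMono.injective h1
      subst h3
      have hIH := ih (j + 1) hj' hrest
      have hlab : (eT S).label e.1 = Sum.inl (Ma S j) := by rw [he1]; exact label_work hj'
      have hpe : (eT S).pathEqs (e :: rest) =
          insert (Ma S j, (none : Option ℕ)) ((eT S).pathEqs rest) := by
        simp [DGraph.pathEqs, List.filterMap_cons, hlab, h2]
      rcases hIH with ⟨hpr, rfl⟩ | ⟨j'', i, hle, hj'', hi, hpr, rfl⟩
      · left
        refine ⟨?_, rfl⟩
        have hIco : Finset.Ico j (eN S) = insert j (Finset.Ico (j + 1) (eN S)) := by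
          ext x; simp only [Finset.mem_Ico, Finset.mem_insert]; omega
        rw [hpe, hpr, hIco, Finset.image_insert]
      · right
        refine ⟨j'', i, by omega, hj'', hi, ?_, rfl⟩
        have hIco : Finset.Ico j j'' = insert j (Finset.Ico (j + 1) j'') := by
          ext x; simp only [Finset.mem_Ico, Finset.mem_insert]; omega
        rw [hpe, hpr, hIco, Finset.image_insert]
        ext q
        simp only [Finset.mem_insert]
        tauto
    · simp only [Prod.mk.injEq] at h
      obtain ⟨h1, h2, h3⟩ := h
      obtain rfl : j = j' := eo_strictMono.injective h1
      subst h3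
      cases rest with
      | cons e2 rest2 =>
        obtain ⟨he2, w2, hw2, -⟩ := hrest
        obtain ⟨j2, hj2, hh⟩ := eT_edge_src hw2
        exact absurd hh (termId_ne_eo hi j2)
      | nil =>
        have hteq : t = eo S j + 1 + i := hrest.symm
        right
        refine ⟨j, i, le_rfl, hj', hi, ?_, hteq⟩
        have hlab : (eT S).label e.1 = Sum.inl (Ma S j) := by rw [he1]; exact label_work hj'
        rw [Finset.Ico_self, Finset.image_empty]
        simp [DGraph.pathEqs, hlab, h2]

lemma eT_solvesSR (hd : dPar S = 1) : (eT S).SolvesSR S := by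
  rintro p t ⟨hchain, hterm, hlt⟩ hcons
  have hchain0 : (eT S).chainFrom (eo S 0) p t := by rw [eo_zero]; exact hchain
  rcases eT_chain p 0 (Nat.zero_le _) hchain0 hterm with
    ⟨hpe, rfl⟩ | ⟨j, i, -, hj, hi, hpe, rfl⟩
  · have hts : (eT S).termSet (eo S (eN S)) = eZf S := by
      simp [DGraph.termSet, label_fin]
    rw [hts]
    constructor
    · intro r hr
      simp only [eZf, Finset.mem_filter] at hr
      rw [liftK, hr.2]
      simp
    · intro hempty r hr hcc
      have hKne : r.K ≠ ∅ := by
        intro hK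
        have : r ∈ eZf S := Finset.mem_filter.mpr ⟨hr, hK⟩
        rw [hempty] at this
        simp at this
      obtain ⟨q, hq⟩ := Finset.nonempty_iff_ne_empty.mpr hKne
      have hb : q.1 ∈ attrs S := mem_attrs.mpr ⟨r, hr, q.2, by simpa using hq⟩
      have hbM : q.1 ∈ eM S := (Finset.mem_sort (α := ℕ) (· ≤ ·)).mpr hb
      obtain ⟨x, hx, hget⟩ := List.mem_iff_getElem.mp hbM
      have h1 : (q.1, some q.2) ∈ liftK r.K ∪ (eT S).pathEqs p :=
        Finset.mem_union_left _ (Finset.mem_image_of_mem _ hq)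
      have h2 : (q.1, (none : Option ℕ)) ∈ liftK r.K ∪ (eT S).pathEqs p := by
        apply Finset.mem_union_right
        rw [hpe]
        apply Finset.mem_image.mpr
        refine ⟨x, Finset.mem_Ico.mpr ⟨Nat.zero_le _, hx⟩, ?_⟩
        rw [Ma, List.getD_eq_getElem _ 0 hx, hget]
      have := hcc _ h1 _ h2 rfl
      simp at this
  · have hts : (eT S).termSet (eo S j + 1 + i) = eZt S j i := by
      simp [DGraph.termSet, label_term hj hi]
    rw [hts]
    constructor
    · intro r hr
      simp only [eZt, Finset.mem_filter] at hr
      intro q hq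
      simp only [liftK, Finset.mem_image] at hq
      obtain ⟨pp, hpp, rfl⟩ := hq
      have := hr.2 hpp
      simp only [Finset.mem_singleton] at this
      subst this
      rw [hpe]
      exact Finset.mem_insert_self _ _
    · intro hempty
      exfalso
      have hδ : (eL S j).getD i 0 ∈ VS S (Ma S j) := by
        rw [← Finset.mem_sort (α := ℕ) (· ≤ ·), ← eL,
          List.getD_eq_getElem _ 0 (show i < (eL S j).length from hi)]
        exact List.getElem_mem _
      obtain ⟨r, hr, hK⟩ := mem_VS.mp hδ
      have : r ∈ eZt S j i := Finset.mem_filter.mpr ⟨hr, by rw [ruleK_singleton hd hr hK]⟩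
      rw [hempty] at this
      simp at this

lemma eT_size : (eT S).size ≤ nPar S * (kPar S + 1) + 1 := by
  have h2 : eN S = nPar S := by rw [eN, eM, Finset.length_sort, nPar]
  show eo S (eN S) + 1 ≤ nPar S * (kPar S + 1) + 1
  have h1 : eo S (eN S) ≤ eN S * (kPar S + 1) := by
    rw [eo]
    calc ∑ x ∈ Finset.range (eN S), (1 + ec S x)
        ≤ ∑ _x ∈ Finset.range (eN S), (kPar S + 1) := by
          apply Finset.sum_le_sum
          intro x hx
          have := ec_le x (Finset.mem_range.mp hx)
          omega
      _ = eN S * (kPar S + 1) := by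
          rw [Finset.sum_const, Finset.card_range, smul_eq_mul]
  rw [h2] at h1 ⊢
  omega

end ETree
/-- Lemma 13: if d(S) = 1, then there is an o-decision tree over S solving SR(S) with
at most k(S) + 1 nodes and an e-decision tree over S solving ESR(S) with at most
n(S)·(k(S) + 1) + 1 nodes; in particular L_SR(S) ≤ k(S) + 1 and
L_ESR(S) ≤ n(S)·(k(S) + 1) + 1. -/
theorem statement_7 (S : Finset Rule) (hS : S.Nonempty) (hwf : ∀ r ∈ S, r.WF)
    (hd : dPar S = 1) :
    (∃ G : DGraph, TreeSolvesSR S G ∧ G.size ≤ kPar S + 1) ∧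
    (∃ G : DGraph, TreeSolvesESR S G ∧ G.size ≤ nPar S * (kPar S + 1) + 1) ∧
    L_SR S ≤ kPar S + 1 ∧ L_ESR S ≤ nPar S * (kPar S + 1) + 1 := by
  obtain ⟨a, ha⟩ := attrs_nonempty hd
  obtain ⟨hsolo, hsizeo⟩ := oT_solves ha hd
  have hsole : TreeSolvesESR S (eT S) := ⟨eT_IsDG, eT_IsTree, eT_solvesSR hd⟩
  have hsizee := eT_size (S := S)
  refine ⟨⟨oT S a, hsolo, hsizeo⟩, ⟨eT S, hsole, hsizee⟩, ?_, ?_⟩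
  · exact le_trans (Nat.sInf_le ⟨oT S a, hsolo, rfl⟩) hsizeo
  · exact le_trans (Nat.sInf_le ⟨eT S, hsole, rfl⟩) hsizee

end DRS

end
end

section
/- Let k ≥ 2 and d ≥ 2 be integers. Then there is no polynomial p with the property that L_SR(S) ≤ p(|S|) for every reduced decision rule system S with k(S) = k and d(S) = d; that is, for every polynomial p there exists a reduced decision rule system S with k(S) = k, d(S) = d, and L_SR(S) > p(|S|). -/
/- Common formal framework for decision rule systems and decision trees /
   acyclic decision graphs, following Durdymyradov & Moshkov. -/

attribute [local instance] Classical.propDecidable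

noncomputable section

namespace DRS

/-! ### Auxiliary construction for statement_9 -/

namespace Aux9

/-- The rule (a_{2i}=δ) ∧ (a_{2i+1}=δ) → 0. -/
def pairRule (i δ : ℕ) : Rule := ⟨{(2*i, δ), (2*i+1, δ)}, 0⟩

/-- The rule (a_0=0) ∧ ⋯ ∧ (a_{d-1}=0) → 0. -/
def starRule (d : ℕ) : Rule := ⟨(Finset.range d).image (fun j => (j, 0)), 0⟩

/-- The hard system. -/
def sys (m k d : ℕ) : Finset Rule :=
  ((Finset.range m ×ˢ Finset.range k).image fun q => pairRule q.1 q.2) ∪ {starRule d}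

lemma mem_pairRule_K {pr : ℕ × ℕ} {i δ : ℕ} :
    pr ∈ (pairRule i δ).K ↔ pr = (2*i, δ) ∨ pr = (2*i+1, δ) := by
  simp [pairRule]

lemma mem_starRule_K {pr : ℕ × ℕ} {d : ℕ} :
    pr ∈ (starRule d).K ↔ pr.1 < d ∧ pr.2 = 0 := by
  constructor
  · simp only [starRule, Finset.mem_image, Finset.mem_range]
    rintro ⟨j, hj, rfl⟩; exact ⟨hj, rfl⟩
  · rintro ⟨h1, h2⟩
    simp only [starRule, Finset.mem_image, Finset.mem_range]
    exact ⟨pr.1, h1, by rw [← h2]⟩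

lemma mem_sys {r : Rule} {m k d : ℕ} :
    r ∈ sys m k d ↔ (∃ i < m, ∃ δ < k, r = pairRule i δ) ∨ r = starRule d := by
  simp only [sys, Finset.mem_union, Finset.mem_image, Finset.mem_singleton,
    Finset.mem_product, Finset.mem_range]
  constructor
  · rintro (⟨⟨i, δ⟩, ⟨h1, h2⟩, rfl⟩ | h)
    · exact Or.inl ⟨i, h1, δ, h2, rfl⟩
    · exact Or.inr h
  · rintro (⟨i, h1, δ, h2, rfl⟩ | h)
    · exact Or.inl ⟨⟨i, δ⟩, ⟨h1, h2⟩, rfl⟩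
    · exact Or.inr h

lemma starRule_mem_sys {m k d : ℕ} : starRule d ∈ sys m k d :=
  mem_sys.2 (Or.inr rfl)

lemma pairRule_mem_sys {m k d i δ : ℕ} (hi : i < m) (hδ : δ < k) :
    pairRule i δ ∈ sys m k d :=
  mem_sys.2 (Or.inl ⟨i, hi, δ, hδ, rfl⟩)

/-- Key bound on attributes and values appearing in rules of `sys`. -/
lemma sys_K_bound {m k d : ℕ} (hdm : d ≤ 2*m) (hk : 1 ≤ k) {r : Rule}
    (hr : r ∈ sys m k d) {pr : ℕ × ℕ} (hpr : pr ∈ r.K) : pr.1 < 2*m ∧ pr.2 < k := by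
  rcases mem_sys.1 hr with ⟨i, hi, δ, hδ, rfl⟩ | rfl
  · rcases mem_pairRule_K.1 hpr with rfl | rfl <;> constructor <;> simp <;> omega
  · rcases mem_starRule_K.1 hpr with ⟨h1, h2⟩
    exact ⟨lt_of_lt_of_le h1 hdm, by omega⟩

lemma attrs_sys {m k d : ℕ} (hdm : d ≤ 2*m) (hk : 1 ≤ k) :
    attrs (sys m k d) = Finset.range (2*m) := by
  ext a
  simp only [attrs, Finset.mem_biUnion, Finset.mem_range, Rule.attrs, Finset.mem_image]
  constructor
  · rintro ⟨r, hr, pr, hpr, rfl⟩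
    exact (sys_K_bound hdm hk hr hpr).1
  · intro ha
    refine ⟨pairRule (a/2) 0, pairRule_mem_sys (by omega) hk, (a, 0), ?_, rfl⟩
    rw [mem_pairRule_K]
    rcases Nat.even_or_odd a with ⟨t, ht⟩ | ⟨t, ht⟩
    · left; rw [Prod.mk.injEq]; constructor
      · omega
      · rfl
    · right; rw [Prod.mk.injEq]; constructor
      · omega
      · rfl

lemma VS_sys {m k d : ℕ} (hdm : d ≤ 2*m) (hk : 1 ≤ k) {a : ℕ} (ha : a < 2*m) :
    VS (sys m k d) a = Finset.range k := by
  ext δ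
  simp only [VS, Finset.mem_image, Finset.mem_filter, Finset.mem_biUnion, Finset.mem_range]
  constructor
  · rintro ⟨pr, ⟨⟨r, hr, hpr⟩, h1⟩, rfl⟩
    exact (sys_K_bound hdm hk hr hpr).2
  · intro hδ
    refine ⟨(a, δ), ⟨⟨pairRule (a/2) δ, pairRule_mem_sys (by omega) hδ, ?_⟩, rfl⟩, rfl⟩
    rw [mem_pairRule_K]
    rcases Nat.even_or_odd a with ⟨t, ht⟩ | ⟨t, ht⟩
    · left; rw [Prod.mk.injEq]; exact ⟨by omega, rfl⟩
    · right; rw [Prod.mk.injEq]; exact ⟨by omega, rfl⟩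

lemma kPar_sys {m k d : ℕ} (hdm : d ≤ 2*m) (hk : 1 ≤ k) (hm : 1 ≤ m) :
    kPar (sys m k d) = k := by
  rw [kPar, attrs_sys hdm hk]
  have : ∀ a ∈ Finset.range (2*m), (VS (sys m k d) a).card = k := by
    intro a ha
    rw [VS_sys hdm hk (Finset.mem_range.1 ha), Finset.card_range]
  rw [Finset.sup_congr rfl this]
  have hne : (Finset.range (2*m)).Nonempty := ⟨0, by simp; omega⟩
  exact Finset.sup_const hne k

lemma len_pairRule {i δ : ℕ} : (pairRule i δ).len = 2 := by
  rw [Rule.len, pairRule]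
  rw [Finset.card_insert_of_notMem (by simp), Finset.card_singleton]

lemma len_starRule {d : ℕ} : (starRule d).len = d := by
  rw [Rule.len, starRule, Finset.card_image_of_injective _ (fun a b h => by
    simpa using congrArg Prod.fst h), Finset.card_range]

lemma dPar_sys {m k d : ℕ} (hd : 2 ≤ d) : dPar (sys m k d) = d := by
  apply le_antisymm
  · apply Finset.sup_le
    intro r hr
    rcases mem_sys.1 hr with ⟨i, _, δ, _, rfl⟩ | rfl
    · rw [len_pairRule]; omega
    · rw [len_starRule]
  · calc d = (starRule d).len := len_starRule.symm
      _ ≤ _ := Finset.le_sup starRule_mem_sys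

lemma rhs_sys {m k d : ℕ} {r : Rule} (hr : r ∈ sys m k d) : r.rhs = 0 := by
  rcases mem_sys.1 hr with ⟨i, _, δ, _, rfl⟩ | rfl <;> rfl

lemma sys_nonempty {m k d : ℕ} : (sys m k d).Nonempty := ⟨starRule d, starRule_mem_sys⟩

lemma sys_WF {m k d : ℕ} : ∀ r ∈ sys m k d, r.WF := by
  intro r hr p hp q hq h1
  rcases mem_sys.1 hr with ⟨i, _, δ, _, rfl⟩ | rfl
  · rcases mem_pairRule_K.1 hp with rfl | rfl <;>
      rcases mem_pairRule_K.1 hq with rfl | rfl <;> simp_all <;> omega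
  · rcases mem_starRule_K.1 hp with ⟨_, h2⟩
    rcases mem_starRule_K.1 hq with ⟨_, h3⟩
    exact Prod.ext h1 (h2.trans h3.symm)

lemma sys_reduced {m k d : ℕ} (hdm : d ≤ 2*m) (hk : 1 ≤ k) (hm : 1 ≤ m) (hd : 2 ≤ d) :
    Reduced (sys m k d) := by
  refine ⟨?_, ?_, ?_, ?_⟩
  · intro a ha
    rw [attrs_sys hdm hk] at ha
    rw [nPar, attrs_sys hdm hk, Finset.card_range]
    simp only [Finset.mem_range] at *
    omega
  · intro σ hσ
    rcases Finset.mem_image.1 hσ with ⟨r, hr, rfl⟩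
    rw [rhs_sys hr]
    simp
  · intro a ha
    rw [attrs_sys hdm hk] at ha
    rw [VS_sys hdm hk (Finset.mem_range.1 ha), kPar_sys hdm hk hm]
    intro x hx
    simp only [Finset.mem_range] at *
    omega
  · rw [dPar_sys hd]; omega

lemma sys_card_le {m k d : ℕ} : (sys m k d).card ≤ m * k + 1 := by
  calc (sys m k d).card ≤ ((Finset.range m ×ˢ Finset.range k).image fun q : ℕ × ℕ =>
        pairRule q.1 q.2).card + ({starRule d} : Finset Rule).card := Finset.card_union_le _ _
    _ ≤ (Finset.range m ×ˢ Finset.range k).card + 1 := by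
        gcongr
        · exact Finset.card_image_le
        · simp
    _ = m * k + 1 := by rw [Finset.card_product, Finset.card_range, Finset.card_range]

/-! #### The complete k-ary tree of depth n -/

/-- Number of nodes of levels < ℓ in a complete k-ary tree. -/
def start (k : ℕ) : ℕ → ℕ
  | 0 => 0
  | ℓ+1 => k * start k ℓ + 1

/-- The level of a node. -/
def lvl (k : ℕ) (v : ℕ) : ℕ :=
  if v = 0 then 0 else lvl k ((v-1)/k) + 1
decreasing_by exact lt_of_le_of_lt (Nat.div_le_self _ _) (by omega)

/-- The sequence of edge labels from the root to a node. -/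
def decode (k : ℕ) (v : ℕ) : List ℕ :=
  if v = 0 then [] else decode k ((v-1)/k) ++ [(v-1) % k]
decreasing_by exact lt_of_le_of_lt (Nat.div_le_self _ _) (by omega)

lemma lvl_zero {k : ℕ} : lvl k 0 = 0 := by rw [lvl]; simp
lemma decode_zero {k : ℕ} : decode k 0 = [] := by rw [decode]; simp

lemma child_sub_div {k v c : ℕ} (hc : c < k) : (k*v+c+1 - 1)/k = v := by
  have h : k*v+c+1-1 = c + v * k := by ring_nf; omega
  rw [h, Nat.add_mul_div_right _ _ (by omega : 0 < k), Nat.div_eq_of_lt hc]; omega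

lemma child_sub_mod {k v c : ℕ} (hc : c < k) : (k*v+c+1 - 1) % k = c := by
  have h : k*v+c+1-1 = c + v * k := by ring_nf; omega
  rw [h, Nat.add_mul_mod_self_right, Nat.mod_eq_of_lt hc]

lemma lvl_child {k v c : ℕ} (hc : c < k) : lvl k (k*v+c+1) = lvl k v + 1 := by
  rw [lvl, if_neg (by omega), child_sub_div hc]

lemma decode_child {k v c : ℕ} (hc : c < k) :
    decode k (k*v+c+1) = decode k v ++ [c] := by
  rw [decode, if_neg (by omega), child_sub_div hc, child_sub_mod hc]

lemma decode_length {k : ℕ} : ∀ v, (decode k v).length = lvl k v := by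
  intro v
  induction v using Nat.strong_induction_on with
  | _ v ih =>
    by_cases h : v = 0
    · subst h; rw [decode_zero, lvl_zero]; rfl
    · rw [decode, if_neg h, lvl, if_neg h, List.length_append]
      rw [ih _ (lt_of_le_of_lt (Nat.div_le_self _ _) (by omega))]
      simp

lemma start_pos {k ℓ : ℕ} (hℓ : 1 ≤ ℓ) : 1 ≤ start k ℓ := by
  cases ℓ with
  | zero => omega
  | succ n => rw [start]; omega

lemma start_lt_succ {k ℓ : ℕ} (hk : 1 ≤ k) : start k ℓ < start k (ℓ+1) := by
  induction ℓ with
  | zero => rw [start, start]; omega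
  | succ n ih =>
    rw [show start k (n+1+1) = k * start k (n+1) + 1 from rfl,
      show start k (n+1) = k * start k n + 1 from rfl]
    have h1 : start k n ≤ k * start k n := Nat.le_mul_of_pos_left _ (by omega)
    have h2 : k * start k n ≤ k * (k * start k n) := Nat.mul_le_mul_left k h1
    rw [Nat.mul_add, Nat.mul_one]
    linarith

lemma lvl_lt_of_lt_start {k : ℕ} (hk : 1 ≤ k) :
    ∀ ℓ v, v < start k ℓ → lvl k v < ℓ := by
  intro ℓ
  induction ℓ with
  | zero => intro v hv; simp [start] at hv
  | succ n ih =>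
    intro v hv
    by_cases h : v = 0
    · subst h; rw [lvl_zero]; omega
    · rw [lvl, if_neg h]
      have : (v-1)/k < start k n := by
        rw [Nat.div_lt_iff_lt_mul (by omega), mul_comm]
        rw [start] at hv
        omega
      have := ih _ this
      omega

lemma lvl_eq_of_mem {k : ℕ} (hk : 1 ≤ k) :
    ∀ ℓ v, start k ℓ ≤ v → v < start k (ℓ+1) → lvl k v = ℓ := by
  intro ℓ
  induction ℓ with
  | zero =>
    intro v h1 h2
    simp [start] at h2
    have : v = 0 := by omega
    subst this
    exact lvl_zero
  | succ n ih =>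
    intro v h1 h2
    have hv : v ≠ 0 := by rw [start] at h1; omega
    rw [lvl, if_neg hv]
    have hle : start k n ≤ (v-1)/k := by
      rw [Nat.le_div_iff_mul_le (by omega : 0 < k), mul_comm]
      rw [start] at h1
      omega
    have hlt : (v-1)/k < start k (n+1) := by
      rw [Nat.div_lt_iff_lt_mul (by omega : 0 < k), mul_comm]
      rw [show start k (n+1+1) = k * start k (n+1) + 1 from rfl] at h2
      omega
    rw [ih _ hle hlt]

/-- The complete k-ary tree of depth n as a decision graph over S. -/
def fullTree (S : Finset Rule) (k n : ℕ) : DGraph where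
  n := start k (n+1)
  root := 0
  label := fun v => if v < start k n then Sum.inl (lvl k v)
    else Sum.inr (S.filter fun r => ∀ pr ∈ r.K, (decode k v).getD pr.1 0 = pr.2)
  edges := (Finset.range (start k n) ×ˢ Finset.range k).image
    fun vc => (vc.1, some vc.2, k*vc.1+vc.2+1)

lemma mem_fullTree_edges {S : Finset Rule} {k n : ℕ} {e : ℕ × Option ℕ × ℕ} :
    e ∈ (fullTree S k n).edges ↔
      ∃ c < k, e.1 < start k n ∧ e.2.1 = some c ∧ e.2.2 = k*e.1+c+1 := by
  simp only [fullTree, Finset.mem_image, Finset.mem_product, Finset.mem_range]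
  constructor
  · rintro ⟨⟨v, c⟩, ⟨h1, h2⟩, rfl⟩
    exact ⟨c, h2, h1, rfl, rfl⟩
  · rcases e with ⟨v, l, w⟩
    rintro ⟨c, h1, h2, hl, hw⟩
    dsimp only at h2 hl hw
    subst hl; subst hw
    exact ⟨⟨v, c⟩, ⟨h2, h1⟩, rfl⟩

lemma fullTree_child_lt {k n v c : ℕ} (hv : v < start k n) (hc : c < k) :
    k*v+c+1 < start k (n+1) := by
  rw [show start k (n+1) = k * start k n + 1 from rfl]
  nlinarith

lemma fullTree_isTerminal_iff {S : Finset Rule} {k n v : ℕ} (hk : 1 ≤ k) :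
    (fullTree S k n).IsTerminal v ↔ ¬ v < start k n := by
  constructor
  · intro h hv
    exact h (v, some 0, k*v+0+1) (mem_fullTree_edges.2 ⟨0, by omega, hv, rfl, rfl⟩) rfl
  · intro h e he hev
    rcases mem_fullTree_edges.1 he with ⟨c, _, h2, _, _⟩
    exact h (hev ▸ h2)

lemma getD_append_cons {l1 l2 : List ℕ} {c : ℕ} :
    (l1 ++ c :: l2).getD l1.length 0 = c := by
  induction l1 with
  | nil => rfl
  | cons a t ih => simpa using ih

/-- Characterization of chains in the full tree. -/
lemma fullTree_chain {S : Finset Rule} {k n : ℕ} (hk : 1 ≤ k) {t : ℕ}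
    (ht : n ≤ lvl k t) :
    ∀ (p : List (ℕ × Option ℕ)) (v : ℕ), (fullTree S k n).chainFrom v p t →
      (∀ e ∈ p, ∃ c < k, e.2 = some c ∧ e.1 < start k n ∧
        (decode k t).getD (lvl k e.1) 0 = c) ∧
      (∀ j, lvl k v ≤ j → j < n → ∃ e ∈ p, lvl k e.1 = j) ∧
      (∃ l2, decode k t = decode k v ++ l2) := by
  intro p
  induction p with
  | nil =>
    intro v hv
    rcases hv with rfl
    exact ⟨by simp, fun j h1 h2 => absurd (lt_of_le_of_lt h1 h2) (by omega), [], by simp⟩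
  | cons e rest ih =>
    intro v hv
    rcases hv with ⟨he1, w, hw, hrest⟩
    rcases mem_fullTree_edges.1 hw with ⟨c, hc, hv1, hl, hw2⟩
    simp only at hl hw2
    subst hw2
    have ih' := ih _ hrest
    have hlw : lvl k (k*v+c+1) = lvl k v + 1 := lvl_child hc
    have hdw : decode k (k*v+c+1) = decode k v ++ [c] := decode_child hc
    rcases ih' with ⟨ha, hb, l2, hdec⟩
    have hdect : decode k t = decode k v ++ c :: l2 := by
      rw [hdec, hdw, List.append_assoc]; rfl
    refine ⟨?_, ?_, ⟨c :: l2, hdect⟩⟩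
    · intro f hf
      rcases List.mem_cons.1 hf with rfl | hf'
      · refine ⟨c, hc, hl, he1 ▸ hv1, ?_⟩
        rw [he1, hdect, ← decode_length, getD_append_cons]
      · exact ha f hf'
    · intro j h1 h2
      rcases Nat.eq_or_lt_of_le h1 with rfl | h1'
      · exact ⟨e, List.mem_cons_self, by rw [he1]⟩
      · rcases hb j (by omega) h2 with ⟨f, hf, hfj⟩
        exact ⟨f, List.mem_cons_of_mem _ hf, hfj⟩

/-- pathEqs characterization for complete paths in the full tree. -/
lemma fullTree_pathEqs {S : Finset Rule} {k n : ℕ} (hk : 1 ≤ k)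
    {p : List (ℕ × Option ℕ)} {t : ℕ} (hpath : (fullTree S k n).IsCompletePath p t) :
    (∀ pr ∈ (fullTree S k n).pathEqs p, pr.1 < n ∧
        pr.2 = some ((decode k t).getD pr.1 0)) ∧
    (∀ j < n, (j, some ((decode k t).getD j 0)) ∈ (fullTree S k n).pathEqs p) := by
  rcases hpath with ⟨hchain, hterm, htlt⟩
  have ht1 : start k n ≤ t := by
    by_contra h
    exact (fullTree_isTerminal_iff hk).1 hterm (by omega)
  have hlvlt : lvl k t = n := lvl_eq_of_mem hk n t ht1 htlt
  have H := fullTree_chain hk (le_of_eq hlvlt.symm) p 0 hchain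
  rcases H with ⟨ha, hb, _⟩
  constructor
  · intro pr hpr
    rw [DGraph.pathEqs, List.mem_toFinset, List.mem_filterMap] at hpr
    rcases hpr with ⟨e, he, hfe⟩
    rcases ha e he with ⟨c, hc, he2, he1, hgd⟩
    have hlabel : (fullTree S k n).label e.1 = Sum.inl (lvl k e.1) := by
      simp [fullTree, if_pos he1]
    rw [hlabel] at hfe
    simp only [Sum.elim_inl, Option.some.injEq] at hfe
    subst hfe
    have : lvl k e.1 < n := lvl_lt_of_lt_start hk n e.1 he1
    exact ⟨this, by rw [he2, hgd]⟩
  · intro j hj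
    rcases hb j (by rw [lvl_zero]; omega) hj with ⟨e, he, hej⟩
    rcases ha e he with ⟨c, hc, he2, he1, hgd⟩
    rw [DGraph.pathEqs, List.mem_toFinset, List.mem_filterMap]
    refine ⟨e, he, ?_⟩
    have hlabel : (fullTree S k n).label e.1 = Sum.inl (lvl k e.1) := by
      simp [fullTree, if_pos he1]
    rw [hlabel]
    simp only [Sum.elim_inl, Option.some.injEq]
    rw [hej, he2, hej] at *
    rw [hgd]

lemma fullTree_step_lt {S : Finset Rule} {k n u v : ℕ} (hk : 1 ≤ k)
    (h : (fullTree S k n).step u v) : u < v := by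
  rcases h with ⟨l, hl⟩
  rcases mem_fullTree_edges.1 hl with ⟨c, hc, _, _, hv⟩
  simp only at hv
  subst hv
  nlinarith

/-- The full tree is a decision tree over S solving SR(S). -/
theorem fullTree_solves {S : Finset Rule} {k n : ℕ} (hk : 1 ≤ k) (hn : 1 ≤ n)
    (Hattrs : ∀ a < n, a ∈ attrs S)
    (HV : ∀ a < n, VS S a = Finset.range k)
    (HS : ∀ r ∈ S, ∀ pr ∈ r.K, pr.1 < n) :
    TreeSolvesSR S (fullTree S k n) := by
  have hstart : start k n < start k (n+1) := start_lt_succ hk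
  refine ⟨⟨?_, ?_, ?_, ?_⟩, ⟨?_, ?_⟩, ?_⟩
  · -- root < n
    show 0 < start k (n+1)
    exact start_pos (by omega)
  · -- edge bounds
    intro e he
    rcases mem_fullTree_edges.1 he with ⟨c, hc, h1, _, h2⟩
    constructor
    · show e.1 < start k (n+1)
      omega
    · show e.2.2 < start k (n+1)
      rw [h2]
      exact fullTree_child_lt h1 hc
  · -- acyclic
    intro v hv
    have : ∀ a b, Relation.TransGen (fullTree S k n).step a b → a < b := by
      intro a b h
      induction h with
      | single h => exact fullTree_step_lt hk h
      | tail _ h ih => exact lt_trans ih (fullTree_step_lt hk h)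
    exact absurd (this v v hv) (lt_irrefl v)
  · -- node condition
    intro v hv
    by_cases hvs : v < start k n
    · rw [if_neg (by rw [fullTree_isTerminal_iff hk]; exact fun h => h hvs)]
      refine ⟨lvl k v, by simp [fullTree, if_pos hvs], Hattrs _ (lvl_lt_of_lt_start hk n v hvs), ?_, ?_⟩
      · intro l
        rw [allowed, HV _ (lvl_lt_of_lt_start hk n v hvs)]
        constructor
        · rintro ⟨w, hw⟩
          rcases mem_fullTree_edges.1 hw with ⟨c, hc, _, hl, _⟩
          simp only at hl
          subst hl
          simp [hc]
        · intro hl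
          simp only [Finset.mem_union, Finset.mem_image, Finset.mem_range] at hl
          rcases hl with ⟨c, hc, rfl⟩ | hl
          · exact ⟨k*v+c+1, mem_fullTree_edges.2 ⟨c, hc, hvs, rfl, rfl⟩⟩
          · simp at hl
      · intro l w w' hw hw'
        rcases mem_fullTree_edges.1 hw with ⟨c, hc, _, hl, hwv⟩
        rcases mem_fullTree_edges.1 hw' with ⟨c', hc', _, hl', hwv'⟩
        simp only at hl hl' hwv hwv'
        rw [hl] at hl'
        have : c = c' := by injection hl'
        subst this
        rw [hwv, hwv']
    · rw [if_pos (by rw [fullTree_isTerminal_iff hk]; exact hvs)]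
      exact ⟨S.filter fun r => ∀ pr ∈ r.K, (decode k v).getD pr.1 0 = pr.2,
        by simp [fullTree, if_neg hvs], Finset.filter_subset _ _⟩
  · -- no edge into root
    intro e he
    rcases mem_fullTree_edges.1 he with ⟨c, _, _, _, h2⟩
    show e.2.2 ≠ 0
    omega
  · -- unique incoming edge
    intro v hv hv0
    have hv1 : 1 ≤ v := by
      show 1 ≤ v
      rcases Nat.eq_zero_or_pos v with h | h
      · exact absurd h hv0
      · exact h
    have hvn : v < k * start k n + 1 := hv
    have hdiv : (v-1)/k < start k n := by
      rw [Nat.div_lt_iff_lt_mul (by omega : 0 < k), mul_comm]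
      omega
    refine ⟨((v-1)/k, some ((v-1)%k), v), ⟨?_, rfl⟩, ?_⟩
    · refine mem_fullTree_edges.2 ⟨(v-1)%k, Nat.mod_lt _ (by omega), hdiv, rfl, ?_⟩
      show v = k * ((v-1)/k) + (v-1)%k + 1
      have := Nat.div_add_mod (v-1) k
      omega
    · rintro ⟨u, l, w⟩ ⟨he, hw⟩
      rcases mem_fullTree_edges.1 he with ⟨c, hc, hu, hl, hwv⟩
      simp only at hl hwv hw ⊢
      subst hl
      subst hw
      subst hwv
      rw [child_sub_div hc, child_sub_mod hc]
  · -- SolvesSR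
    intro p t hpath hcons
    have hterm := hpath.2.1
    have htlt := hpath.2.2
    have ht1 : start k n ≤ t := by
      by_contra h
      exact (fullTree_isTerminal_iff hk).1 hterm (by omega)
    have htermSet : (fullTree S k n).termSet t
        = S.filter fun r => ∀ pr ∈ r.K, (decode k t).getD pr.1 0 = pr.2 := by
      rw [DGraph.termSet]
      rw [show (fullTree S k n).label t = Sum.inr (S.filter fun r => ∀ pr ∈ r.K,
        (decode k t).getD pr.1 0 = pr.2) from by simp [fullTree, if_neg (by omega : ¬ t < start k n)]]
      rfl
    have hchar := fullTree_pathEqs hk hpath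
    constructor
    · intro r hr
      rw [htermSet, Finset.mem_filter] at hr
      intro pr hpr
      rw [liftK, Finset.mem_image] at hpr
      rcases hpr with ⟨q, hq, rfl⟩
      have h1 : q.1 < n := HS r hr.1 q hq
      have h2 := hchar.2 q.1 h1
      rw [hr.2 q hq] at h2
      exact h2
    · intro hempty r hrS hconsu
      rw [htermSet] at hempty
      have : ¬ ∀ pr ∈ r.K, (decode k t).getD pr.1 0 = pr.2 := by
        intro hall
        have : r ∈ S.filter fun r => ∀ pr ∈ r.K, (decode k t).getD pr.1 0 = pr.2 :=
          Finset.mem_filter.2 ⟨hrS, hall⟩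
        rw [hempty] at this
        simp at this
      push_neg at this
      rcases this with ⟨q, hq, hne⟩
      have h1 : q.1 < n := HS r hrS q hq
      have h2 := hchar.2 q.1 h1
      have h3 : (q.1, some q.2) ∈ liftK r.K ∪ (fullTree S k n).pathEqs p :=
        Finset.mem_union_left _ (Finset.mem_image.2 ⟨q, hq, rfl⟩)
      have h4 : (q.1, some ((decode k t).getD q.1 0)) ∈ liftK r.K ∪ (fullTree S k n).pathEqs p :=
        Finset.mem_union_right _ h2
      have := hconsu _ h3 _ h4 rfl
      simp only [Option.some.injEq] at this
      exact hne this.symm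

/-! #### Generic lemmas about decision trees -/

lemma chain_snoc {G : DGraph} : ∀ (p : List (ℕ × Option ℕ)) (v t : ℕ),
    G.chainFrom v p t → p ≠ [] →
    ∃ q u l, p = q ++ [(u, l)] ∧ G.chainFrom v q u ∧ (u, l, t) ∈ G.edges := by
  intro p
  induction p with
  | nil => intro v t _ h; exact absurd rfl h
  | cons e rest ih =>
    intro v t hc _
    rcases hc with ⟨he1, w, hw, hrest⟩
    cases rest with
    | nil =>
      have hwt : w = t := hrest
      subst hwt
      refine ⟨[], v, e.2, ?_, rfl, hw⟩
      simp [← he1]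
    | cons f rest' =>
      rcases ih _ _ hrest (by simp) with ⟨q, u, l, hq, hcq, hedge⟩
      exact ⟨e :: q, u, l, by rw [hq]; rfl, ⟨he1, w, hw, hcq⟩, hedge⟩

lemma chain_unique {G : DGraph} (hTree : G.IsTree)
    (hE : ∀ e ∈ G.edges, e.1 < G.n) :
    ∀ (N : ℕ) (p q : List (ℕ × Option ℕ)) (t : ℕ), p.length ≤ N → t < G.n →
      G.chainFrom G.root p t → G.chainFrom G.root q t → p = q := by
  intro N
  induction N with
  | zero =>
    intro p q t hlen ht hp hq
    have hp0 : p = [] := List.eq_nil_of_length_eq_zero (by omega)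
    subst hp0
    have hrt : G.root = t := hp
    subst hrt
    cases q with
    | nil => rfl
    | cons f rest =>
      rcases chain_snoc _ _ _ hq (by simp) with ⟨_, u, l, _, _, hedge⟩
      exact absurd rfl (hTree.1 _ hedge)
  | succ N ih =>
    intro p q t hlen ht hp hq
    by_cases hp0 : p = []
    · subst hp0
      have hrt : G.root = t := hp
      subst hrt
      cases q with
      | nil => rfl
      | cons f rest =>
        rcases chain_snoc _ _ _ hq (by simp) with ⟨_, u, l, _, _, hedge⟩
        exact absurd rfl (hTree.1 _ hedge)
    · rcases chain_snoc _ _ _ hp hp0 with ⟨p0, u, l, hpe, hcp, hedge⟩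
      have htroot : t ≠ G.root := fun h => (hTree.1 _ hedge) (by exact h)
      have hq0 : q ≠ [] := by
        intro h
        subst h
        exact htroot ((hq : G.root = t).symm)
      rcases chain_snoc _ _ _ hq hq0 with ⟨q0, u', l', hqe, hcq, hedge'⟩
      rcases hTree.2 t ht htroot with ⟨e₀, _, huniq⟩
      have h1 := huniq _ ⟨hedge, rfl⟩
      have h2 := huniq _ ⟨hedge', rfl⟩
      rw [← h2] at h1
      injection h1 with h1a h1b
      injection h1b with h1c _
      subst h1a
      subst h1c
      have hun : u < G.n := hE _ hedge
      have hp0len : p0.length ≤ N := by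
        have := congrArg List.length hpe
        simp at this
        omega
      rw [hpe, hqe, ih p0 q0 u hp0len hun hcp hcq]

/-- The set of strict descendants of a node. -/
def descSet (G : DGraph) (v : ℕ) : Finset ℕ :=
  (Finset.range G.n).filter fun w => Relation.TransGen G.step v w

lemma follow_exists {G : DGraph} {S : Finset Rule} (hDG : G.IsDG S false)
    {x : ℕ → ℕ} (hx : ∀ a ∈ attrs S, x a ∈ VS S a) :
    ∀ (N v : ℕ), v < G.n → (descSet G v).card ≤ N →
      ∃ p t, G.chainFrom v p t ∧ G.IsTerminal t ∧ t < G.n ∧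
        ∀ e ∈ p, ∃ a, G.label e.1 = Sum.inl a ∧ e.2 = some (x a) := by
  have main : ∀ (N : ℕ),
      (∀ v, v < G.n → (descSet G v).card ≤ N →
        ∃ p t, G.chainFrom v p t ∧ G.IsTerminal t ∧ t < G.n ∧
          ∀ e ∈ p, ∃ a, G.label e.1 = Sum.inl a ∧ e.2 = some (x a)) := by
    intro N
    induction N with
    | zero =>
      intro v hv hcard
      by_cases hterm : G.IsTerminal v
      · exact ⟨[], v, rfl, hterm, hv, by simp⟩
      · exfalso
        have h4 := hDG.2.2.2 v hv
        rw [if_neg hterm] at h4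
        rcases h4 with ⟨a, hlab, haS, hiff, _⟩
        have hxa : some (x a) ∈ allowed S false a := by
          rw [allowed]
          exact Finset.mem_union_left _ (Finset.mem_image.2 ⟨x a, hx a haS, rfl⟩)
        obtain ⟨w, hw⟩ := (hiff (some (x a))).2 hxa
        have hwn : w < G.n := (hDG.2.1 _ hw).2
        have hmem : w ∈ descSet G v := by
          rw [descSet, Finset.mem_filter, Finset.mem_range]
          exact ⟨hwn, Relation.TransGen.single ⟨_, hw⟩⟩
        have := Finset.card_pos.2 ⟨w, hmem⟩
        omega
    | succ N ih =>
      intro v hv hcard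
      by_cases hterm : G.IsTerminal v
      · exact ⟨[], v, rfl, hterm, hv, by simp⟩
      · have h4 := hDG.2.2.2 v hv
        rw [if_neg hterm] at h4
        rcases h4 with ⟨a, hlab, haS, hiff, _⟩
        have hxa : some (x a) ∈ allowed S false a := by
          rw [allowed]
          exact Finset.mem_union_left _ (Finset.mem_image.2 ⟨x a, hx a haS, rfl⟩)
        obtain ⟨w, hw⟩ := (hiff (some (x a))).2 hxa
        have hwn : w < G.n := (hDG.2.1 _ hw).2
        have hsub : descSet G w ⊂ descSet G v := by
          rw [Finset.ssubset_iff_of_subset]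
          · refine ⟨w, ?_, ?_⟩
            · rw [descSet, Finset.mem_filter, Finset.mem_range]
              exact ⟨hwn, Relation.TransGen.single ⟨_, hw⟩⟩
            · rw [descSet, Finset.mem_filter]
              intro hmem
              exact hDG.2.2.1 w hmem.2
          · intro u hu
            rw [descSet, Finset.mem_filter] at hu ⊢
            exact ⟨hu.1, Relation.TransGen.head ⟨_, hw⟩ hu.2⟩
        have hcard' : (descSet G w).card ≤ N := by
          have := Finset.card_lt_card hsub
          omega
        rcases ih w hwn hcard' with ⟨p, t, hchain, ht1, ht2, hprop⟩
        refine ⟨(v, some (x a)) :: p, t, ⟨rfl, w, hw, hchain⟩, ht1, ht2, ?_⟩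
        intro e he
        rcases List.mem_cons.1 he with rfl | he'
        · exact ⟨a, hlab, rfl⟩
        · exact hprop e he'
  exact main

lemma pathEqs_of_follow {G : DGraph} {x : ℕ → ℕ} {p : List (ℕ × Option ℕ)}
    (hp : ∀ e ∈ p, ∃ a, G.label e.1 = Sum.inl a ∧ e.2 = some (x a)) :
    ∀ pr ∈ G.pathEqs p, pr.2 = some (x pr.1) := by
  intro pr hpr
  rw [DGraph.pathEqs, List.mem_toFinset, List.mem_filterMap] at hpr
  rcases hpr with ⟨e, he, hfe⟩
  rcases hp e he with ⟨a, hlab, he2⟩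
  rw [hlab] at hfe
  simp only [Sum.elim_inl, Option.some.injEq] at hfe
  subst hfe
  exact he2

/-! #### The lower bound -/

/-- The assignment associated with b : Fin m → Bool. -/
def xval (m : ℕ) (b : Fin m → Bool) (a : ℕ) : ℕ :=
  if h : a / 2 < m then (if b ⟨a/2, h⟩ then a % 2 else 1 - a % 2) else 0

lemma xval_lt {m k : ℕ} (hk : 2 ≤ k) (b : Fin m → Bool) (a : ℕ) : xval m b a < k := by
  rw [xval]
  split
  · split <;> omega
  · omega

lemma xval_even {m : ℕ} (b : Fin m → Bool) {i : ℕ} (hi : i < m) :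
    xval m b (2*i) = if b ⟨i, hi⟩ then 0 else 1 := by
  have h1 : 2*i/2 = i := by omega
  have h2 : 2*i % 2 = 0 := by omega
  rw [xval]
  rw [dif_pos (by omega : 2*i/2 < m)]
  congr 1 <;> simp [h1, h2]

lemma xval_odd {m : ℕ} (b : Fin m → Bool) {i : ℕ} (hi : i < m) :
    xval m b (2*i+1) = if b ⟨i, hi⟩ then 1 else 0 := by
  have h1 : (2*i+1)/2 = i := by omega
  have h2 : (2*i+1) % 2 = 1 := by omega
  rw [xval]
  rw [dif_pos (by omega : (2*i+1)/2 < m)]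
  congr 1 <;> simp [h1, h2]

lemma xval_ne {m : ℕ} (b : Fin m → Bool) {i : ℕ} (hi : i < m) :
    xval m b (2*i) ≠ xval m b (2*i+1) := by
  rw [xval_even b hi, xval_odd b hi]
  cases b ⟨i, hi⟩ <;> simp

/-- Every decision tree solving SR(sys m k d) has at least 2^m nodes. -/
theorem sys_lowerBound {m k d : ℕ} (hk : 2 ≤ k) (hd : 2 ≤ d) (hdm : d ≤ 2*m) (hm : 1 ≤ m)
    {G : DGraph} (hG : TreeSolvesSR (sys m k d) G) : 2^m ≤ G.n := by
  obtain ⟨hDG, hTree, hSolve⟩ := hG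
  set S := sys m k d with hS
  have key : ∀ b : Fin m → Bool, ∃ t p,
      G.chainFrom G.root p t ∧ t < G.n ∧
      (∀ i < m, (2*i, some (xval m b (2*i))) ∈ G.pathEqs p) ∧
      (∀ pr ∈ G.pathEqs p, pr.2 = some (xval m b pr.1)) := by
    intro b
    have hx : ∀ a ∈ attrs S, xval m b a ∈ VS S a := by
      intro a ha
      rw [attrs_sys hdm (by omega)] at ha
      rw [VS_sys hdm (by omega) (Finset.mem_range.1 ha), Finset.mem_range]
      exact xval_lt hk b a
    obtain ⟨p, t, hchain, hterm, htn, hprop⟩ :=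
      follow_exists hDG hx (descSet G G.root).card G.root hDG.1 le_rfl
    have hval := pathEqs_of_follow hprop
    have hcons : ConsistentE (G.pathEqs p) := by
      intro pr hpr qr hqr h1
      rw [hval pr hpr, hval qr hqr, h1]
    obtain ⟨hsol1, hsol2⟩ := hSolve p t ⟨hchain, hterm, htn⟩ hcons
    -- termSet t ⊆ S
    have hterm4 := hDG.2.2.2 t htn
    rw [if_pos hterm] at hterm4
    rcases hterm4 with ⟨Z, hZlab, hZS⟩
    have htermZ : G.termSet t = Z := by rw [DGraph.termSet, hZlab]; rfl
    -- termSet t = ∅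
    have hemp : G.termSet t = ∅ := by
      by_contra hne
      rcases Finset.nonempty_of_ne_empty hne with ⟨r, hr⟩
      have hrS : r ∈ S := by rw [htermZ] at hr; exact hZS hr
      have hsub := hsol1 r hr
      have hKval : ∀ pr ∈ r.K, pr.2 = xval m b pr.1 := by
        intro pr hpr
        have : (pr.1, some pr.2) ∈ liftK r.K := Finset.mem_image.2 ⟨pr, hpr, rfl⟩
        have := hval _ (hsub this)
        simp only [Option.some.injEq] at this
        exact this
      rcases mem_sys.1 hrS with ⟨i, hi, δ, hδ, rfl⟩ | rfl
      · have h1 := hKval (2*i, δ) (mem_pairRule_K.2 (Or.inl rfl))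
        have h2 := hKval (2*i+1, δ) (mem_pairRule_K.2 (Or.inr rfl))
        exact xval_ne b hi (by rw [← h1, ← h2])
      · have h1 := hKval (0, 0) (mem_starRule_K.2 ⟨by omega, rfl⟩)
        have h2 := hKval (1, 0) (mem_starRule_K.2 ⟨by omega, rfl⟩)
        have := xval_ne b hm
        simp only [Nat.mul_zero, Nat.zero_add] at this
        exact this (by rw [← h1, ← h2])
    -- extract the values of even attributes
    refine ⟨t, p, hchain, htn, ?_, hval⟩
    intro i hi
    by_contra hnotin
    apply hsol2 hemp (pairRule i (xval m b (2*i+1)))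
      (pairRule_mem_sys hi (xval_lt hk b _))
    intro pr hpr qr hqr hfst
    have hchar : ∀ pr' : ℕ × Option ℕ,
        pr' ∈ liftK (pairRule i (xval m b (2*i+1))).K ∪ G.pathEqs p →
        pr'.2 = some (if pr'.1 = 2*i then xval m b (2*i+1) else xval m b pr'.1) := by
      intro pr' hpr'
      rcases Finset.mem_union.1 hpr' with h | h
      · rcases Finset.mem_image.1 h with ⟨q, hq, rfl⟩
        rcases mem_pairRule_K.1 hq with rfl | rfl
        · simp
        · have : ¬ (2*i+1 = 2*i) := by omega
          simp [this]
      · have h2 := hval pr' h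
        have h3 : pr'.1 ≠ 2*i := by
          intro heq
          apply hnotin
          have : pr' = (2*i, some (xval m b (2*i))) := by
            rw [Prod.ext_iff]
            exact ⟨heq, by rw [h2, heq]⟩
          rw [← this]
          exact h
        rw [if_neg h3]
        exact h2
    rw [hchar pr hpr, hchar qr hqr, hfst]
  choose tfun pfun hchain htlt hmem hval using key
  have hinj : Function.Injective tfun := by
    intro b b' hbb
    have hplen := chain_unique hTree (fun e he => (hDG.2.1 e he).1) (pfun b).length (pfun b) (pfun b') (tfun b)
      le_rfl (htlt b) (hchain b) (by rw [hbb]; exact hchain b')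
    funext i
    have h1 := hmem b i.1 i.2
    rw [hplen] at h1
    have h2 := hval b' _ h1
    simp only [Option.some.injEq] at h2
    have h3 : xval m b (2*i.1) = xval m b' (2*i.1) := h2
    rw [xval_even b i.2, xval_even b' i.2] at h3
    rcases Bool.eq_false_or_eq_true (b ⟨i.1, i.2⟩) with hb | hb <;>
      rcases Bool.eq_false_or_eq_true (b' ⟨i.1, i.2⟩) with hb' | hb' <;>
        simp_all
  calc 2^m = Fintype.card (Fin m → Bool) := by
        simp
    _ = (Finset.univ : Finset (Fin m → Bool)).card := (Finset.card_univ).symm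
    _ ≤ (Finset.range G.n).card := Finset.card_le_card_of_injOn tfun
        (fun b _ => Finset.mem_range.2 (htlt b)) (Function.Injective.injOn hinj)
    _ = G.n := Finset.card_range _

/-! #### Arithmetic: polynomial vs exponential growth -/

lemma poly_eval_mono (p : Polynomial ℕ) {a b : ℕ} (h : a ≤ b) : p.eval a ≤ p.eval b := by
  rw [Polynomial.eval_eq_sum_range, Polynomial.eval_eq_sum_range]
  apply Finset.sum_le_sum
  intro i _
  exact Nat.mul_le_mul_left _ (Nat.pow_le_pow_left h i)

lemma poly_eval_bound (p : Polynomial ℕ) {x : ℕ} (hx : 1 ≤ x) :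
    p.eval x ≤ (∑ i ∈ Finset.range (p.natDegree + 1), p.coeff i) * x ^ p.natDegree := by
  rw [Polynomial.eval_eq_sum_range, Finset.sum_mul]
  apply Finset.sum_le_sum
  intro i hi
  exact Nat.mul_le_mul_left _
    (Nat.pow_le_pow_right hx (by simpa [Nat.lt_succ_iff] using hi))

lemma sq_lt_two_pow : ∀ s, 5 ≤ s → s * s < 2 ^ s := by
  intro s
  induction s with
  | zero => omega
  | succ n ih =>
    intro hs
    rcases Nat.lt_or_ge n 5 with h | h
    · have hn : n = 4 := by omega
      subst hn
      norm_num
    · have h1 := ih (by omega)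
      have h2 : (n+1)*(n+1) ≤ 2*(n*n) := by nlinarith
      calc (n+1)*(n+1) ≤ 2*(n*n) := h2
        _ < 2*2^n := by omega
        _ = 2^(n+1) := by ring

lemma lin_lt_two_pow {a b s : ℕ} (h5 : 5 ≤ s) (hab : a + b + 1 ≤ s) :
    a + s * b < 2 ^ s := by
  calc a + s * b ≤ s + s * b := by omega
    _ = s * (b + 1) := by ring
    _ ≤ s * s := Nat.mul_le_mul_left _ (by omega)
    _ < 2 ^ s := sq_lt_two_pow s h5

end Aux9

/-- For k ≥ 2 and d ≥ 2, there is no polynomial p with L_SR(S) ≤ p(|S|) for all reduced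
systems S with k(S) = k and d(S) = d: for every polynomial p there is such an S with
L_SR(S) > p(|S|). -/
theorem statement_9 (k d : ℕ) (hk : 2 ≤ k) (hd : 2 ≤ d) (p : Polynomial ℕ) :
    ∃ S : Finset Rule, S.Nonempty ∧ (∀ r ∈ S, r.WF) ∧ Reduced S ∧
      kPar S = k ∧ dPar S = d ∧ p.eval S.card < L_SR S := by
  classical
  set D := p.natDegree with hD
  set B := ∑ i ∈ Finset.range (D + 1), p.coeff i with hB
  set C := B * (k+1)^D with hC
  set t := max 5 (C + D + d) with ht
  set m := 2^t with hm
  have ht5 : 5 ≤ t := le_max_left _ _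
  have htC : C + D + d ≤ t := le_max_right _ _
  have htm : t < m := Nat.lt_two_pow_self
  have hm1 : 1 ≤ m := by omega
  have hdm : d ≤ 2*m := by omega
  have hk1 : 1 ≤ k := by omega
  set S := Aux9.sys m k d with hS
  refine ⟨S, Aux9.sys_nonempty, Aux9.sys_WF, Aux9.sys_reduced hdm hk1 hm1 hd,
    Aux9.kPar_sys hdm hk1 hm1, Aux9.dPar_sys hd, ?_⟩
  -- upper estimate on p.eval S.card
  have hcard : S.card ≤ m * (k+1) := by
    have h1 := Aux9.sys_card_le (m := m) (k := k) (d := d)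
    calc S.card ≤ m * k + 1 := h1
      _ ≤ m * (k+1) := by nlinarith
  have hmk1 : 1 ≤ m * (k+1) := by nlinarith
  have heval : p.eval S.card < 2^m := by
    have h1 : p.eval S.card ≤ p.eval (m * (k+1)) := Aux9.poly_eval_mono p hcard
    have h2 : p.eval (m * (k+1)) ≤ B * (m * (k+1)) ^ D := Aux9.poly_eval_bound p hmk1
    have h3 : B * (m * (k+1)) ^ D = C * m ^ D := by
      rw [hC, mul_pow]
      ring
    have h4 : C * m ^ D < 2 ^ (C + t * D) := by
      have hCpow : C < 2 ^ C := Nat.lt_two_pow_self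
      have hmD : m ^ D = 2 ^ (t * D) := by
        rw [hm, ← pow_mul]
      rw [hmD, pow_add]
      have hpos : 0 < 2 ^ (t * D) := Nat.pow_pos (by omega)
      exact (Nat.mul_lt_mul_right hpos).2 hCpow
    have h5 : C + t * D < 2 ^ t := Aux9.lin_lt_two_pow ht5 (by omega)
    have h6 : 2 ^ (C + t * D) ≤ 2 ^ m := Nat.pow_le_pow_right (by omega) (by omega)
    omega
  -- lower bound on L_SR S
  have hLSR : 2^m ≤ L_SR S := by
    rw [L_SR]
    apply le_csInf
    · -- nonempty: the full tree solves SR(S)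
      refine ⟨(Aux9.fullTree S k (2*m)).size, Aux9.fullTree S k (2*m), ?_, rfl⟩
      apply Aux9.fullTree_solves hk1 (by omega)
      · intro a ha
        rw [hS, Aux9.attrs_sys hdm hk1, Finset.mem_range]
        exact ha
      · intro a ha
        rw [hS, Aux9.VS_sys hdm hk1 ha]
      · intro r hr pr hpr
        exact (Aux9.sys_K_bound hdm hk1 hr hpr).1
    · rintro x ⟨G, hG, rfl⟩
      exact Aux9.sys_lowerBound hk hd hdm hm1 hG
  omega

end DRS

end
end

section
/- Let S be a decision rule system and C ∈ {SR, ESR}. Then there exists an acyclic decision graph over S solving the problem C(S) with at most 1 + Σ_{r∈S}(length(r) + 1) nodes; in particular, L^DG_C(S) ≤ 1 + Σ_{r∈S}(length(r) + 1). -/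
/- Common formal framework for decision rule systems and decision trees /
   acyclic decision graphs, following Durdymyradov & Moshkov. -/

attribute [local instance] Classical.propDecidable

noncomputable section

namespace DRS

section Theorem2Construction

variable (S : Finset Rule) (ext : Bool)

/-- Per-node spec: `some (a, δ, F)` for a working node testing attribute `a` with
success value `δ` (success target: next node) and fail target `F`. -/
def buildSpec : ℕ → List Rule → List (Option (ℕ × ℕ × ℕ))
  | _, [] => [none]
  | base, r :: rest =>
      (r.K.toList.map fun q => some (q.1, q.2, base + r.len + 1)) ++
        none :: buildSpec (base + r.len + 1) rest

def buildLbl : List Rule → List (ℕ ⊕ Finset Rule)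
  | [] => [Sum.inr ∅]
  | r :: rest => (r.K.toList.map fun q => Sum.inl q.1) ++ Sum.inr {r} :: buildLbl rest

lemma buildLbl_length (l : List Rule) :
    (buildLbl l).length = (l.map fun r => r.len + 1).sum + 1 := by
  induction l with
  | nil => simp [buildLbl]
  | cons r rest ih =>
      simp [buildLbl, ih, Rule.len, Finset.length_toList]
      omega

lemma buildSpec_length (base : ℕ) (l : List Rule) :
    (buildSpec base l).length = (buildLbl l).length := by
  induction l generalizing base with
  | nil => simp [buildSpec, buildLbl]
  | cons r rest ih => simp [buildSpec, buildLbl, ih]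

def spL : List (Option (ℕ × ℕ × ℕ)) := buildSpec 0 S.toList
def lbL : List (ℕ ⊕ Finset Rule) := buildLbl S.toList
def nn : ℕ := (lbL S).length

def edgesG : Finset (ℕ × Option ℕ × ℕ) :=
  (Finset.range (nn S)).biUnion fun v =>
    ((spL S).getD v none).elim ∅ fun x =>
      (allowed S ext x.1).image fun lab =>
        (v, lab, if lab = some x.2.1 then v + 1 else x.2.2)

def GG : DGraph := ⟨nn S, 0, fun v => (lbL S).getD v (Sum.inr ∅), edgesG S ext⟩

lemma GG_label (v : ℕ) : (GG S ext).label v = (lbL S).getD v (Sum.inr ∅) := rfl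

lemma GG_edges : (GG S ext).edges = edgesG S ext := rfl

lemma GG_termSet_of_lbl {v : ℕ} {Z : Finset Rule}
    (h : (lbL S).getD v (Sum.inr ∅) = Sum.inr Z) : (GG S ext).termSet v = Z := by
  have h' : (GG S ext).label v = Sum.inr Z := by rw [GG_label]; exact h
  simp [DGraph.termSet, h']

lemma mem_edgesG {u w : ℕ} {lab : Option ℕ} :
    (u, lab, w) ∈ edgesG S ext ↔
      u < nn S ∧ ∃ a δ F, (spL S).getD u none = some (a, δ, F) ∧
        lab ∈ allowed S ext a ∧ w = if lab = some δ then u + 1 else F := by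
  constructor
  · intro h
    rcases Finset.mem_biUnion.1 h with ⟨v, hv, hm⟩
    rcases hsp : (spL S).getD v none with _ | ⟨a, δ, F⟩
    · rw [hsp] at hm; simp [Option.elim] at hm
    · rw [hsp] at hm
      simp only [Option.elim] at hm
      rcases Finset.mem_image.1 hm with ⟨l0, hl0, heq⟩
      obtain ⟨h1, h2, h3⟩ : v = u ∧ l0 = lab ∧ (if l0 = some δ then v + 1 else F) = w := by
        simpa [Prod.ext_iff] using heq
      subst h1; subst h2; subst h3
      exact ⟨Finset.mem_range.1 hv, a, δ, F, hsp, hl0, rfl⟩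
  · rintro ⟨hu, a, δ, F, hsp, hlab, rfl⟩
    refine Finset.mem_biUnion.2 ⟨u, Finset.mem_range.2 hu, ?_⟩
    rw [hsp]
    simp only [Option.elim]
    exact Finset.mem_image.2 ⟨lab, hlab, rfl⟩

lemma some_mem_allowed {r : Rule} {q : ℕ × ℕ} (hr : r ∈ S) (hq : q ∈ r.K) :
    (some q.2 : Option ℕ) ∈ allowed S ext q.1 := by
  apply Finset.mem_union_left
  refine Finset.mem_image.2 ⟨q.2, ?_, rfl⟩
  refine Finset.mem_image.2 ⟨q, ?_, rfl⟩
  exact Finset.mem_filter.2 ⟨Finset.mem_biUnion.2 ⟨r, hr, hq⟩, rfl⟩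

lemma char (l : List Rule) : ∀ (base i : ℕ), i < (buildLbl l).length →
    (∃ r ∈ l, ∃ q ∈ r.K, ∃ F',
        (buildSpec base l).getD i none = some (q.1, q.2, base + F') ∧
        (buildLbl l).getD i (Sum.inr ∅) = Sum.inl q.1 ∧
        i + 1 < (buildLbl l).length ∧ i < F' ∧ F' < (buildLbl l).length) ∨
    ((buildSpec base l).getD i none = none ∧
      ∃ Z : Finset Rule, (buildLbl l).getD i (Sum.inr ∅) = Sum.inr Z ∧ ∀ r' ∈ Z, r' ∈ l) := by
  induction l with
  | nil =>
      intro base i hi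
      simp only [buildLbl, List.length_singleton] at hi
      interval_cases i
      right
      refine ⟨by simp [buildSpec], ∅, by simp [buildLbl], by simp⟩
  | cons r rest ih =>
      intro base i hi
      have hm : r.K.toList.length = r.len := by
        simp [Rule.len, Finset.length_toList]
      have hpos : 0 < (buildLbl rest).length := by rw [buildLbl_length]; omega
      have hlenc : (buildLbl (r :: rest)).length = r.len + 1 + (buildLbl rest).length := by
        simp [buildLbl, hm]; omega
      rcases lt_trichotomy i r.len with h | h | h
      · -- working node of rule r
        have hi' : i < r.K.toList.length := by omega
        left
        refine ⟨r, List.mem_cons_self, r.K.toList[i], ?_, r.len + 1, ?_, ?_, ?_, ?_, ?_⟩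
        · exact Finset.mem_toList.1 (List.getElem_mem hi')
        · rw [buildSpec, List.getD_eq_getElem?_getD, List.getElem?_append_left
            (by simpa [List.length_map] using hi'), List.getElem?_map,
            List.getElem?_eq_getElem hi']
          simp [Nat.add_assoc]
        · rw [buildLbl, List.getD_eq_getElem?_getD, List.getElem?_append_left
            (by simpa [List.length_map] using hi'), List.getElem?_map,
            List.getElem?_eq_getElem hi']
          simp
        · omega
        · omega
        · omega
      · -- success terminal of rule r
        right
        subst h
        constructor
        · rw [buildSpec, List.getD_eq_getElem?_getD, List.getElem?_append_right
            (by simp [List.length_map, hm])]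
          simp [List.length_map, hm]
        · refine ⟨{r}, ?_, ?_⟩
          · rw [buildLbl, List.getD_eq_getElem?_getD, List.getElem?_append_right
              (by simp [List.length_map, hm])]
            simp [List.length_map, hm]
          · intro r' hr'
            rw [Finset.mem_singleton] at hr'
            rw [hr']
            exact List.mem_cons_self
      · -- inside the rest
        set i' := i - (r.len + 1) with hi'def
        have hii : i = r.len + 1 + i' := by omega
        have hi' : i' < (buildLbl rest).length := by omega
        have hspEq : (buildSpec base (r :: rest)).getD i none
            = (buildSpec (base + r.len + 1) rest).getD i' none := by
          rw [buildSpec, List.getD_eq_getElem?_getD, List.getElem?_append_right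
            (by simp [List.length_map, hm]; omega)]
          rw [List.getD_eq_getElem?_getD]
          congr 1
          rw [show i - (r.K.toList.map fun q => some (q.1, q.2, base + r.len + 1)).length
              = i' + 1 by simp [List.length_map, hm]; omega]
          exact List.getElem?_cons_succ
        have hlbEq : (buildLbl (r :: rest)).getD i (Sum.inr ∅)
            = (buildLbl rest).getD i' (Sum.inr ∅) := by
          rw [buildLbl, List.getD_eq_getElem?_getD, List.getElem?_append_right
            (by simp [List.length_map, hm]; omega)]
          rw [List.getD_eq_getElem?_getD]
          congr 1
          rw [show i - (r.K.toList.map fun q => Sum.inl q.1).length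
              = i' + 1 by simp [List.length_map, hm]; omega]
          exact List.getElem?_cons_succ
        rcases ih (base + r.len + 1) i' hi' with
          ⟨r', hr', q, hq, F', hsp, hlb, hsucc, hlt, hF⟩ | ⟨hsp, Z, hlb, hZ⟩
        · left
          refine ⟨r', List.mem_cons_of_mem r hr', q, hq, r.len + 1 + F', ?_, ?_, ?_, ?_, ?_⟩
          · rw [hspEq, hsp]
            have harith : base + r.len + 1 + F' = base + (r.len + 1 + F') := by omega
            rw [harith]
          · rw [hlbEq, hlb]
          · omega
          · omega
          · omega
        · right
          exact ⟨by rw [hspEq, hsp], Z, by rw [hlbEq, hlb],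
            fun r' hr' => List.mem_cons_of_mem r (hZ r' hr')⟩

lemma spL_char {v : ℕ} (hv : v < nn S) :
    (∃ r ∈ S, ∃ q ∈ r.K, ∃ F,
        (spL S).getD v none = some (q.1, q.2, F) ∧
        (lbL S).getD v (Sum.inr ∅) = Sum.inl q.1 ∧
        v + 1 < nn S ∧ v < F ∧ F < nn S) ∨
    ((spL S).getD v none = none ∧
      ∃ Z : Finset Rule, (lbL S).getD v (Sum.inr ∅) = Sum.inr Z ∧ Z ⊆ S) := by
  rcases char S.toList 0 v hv with
    ⟨r, hr, q, hq, F', hsp, hlb, hsucc, hlt, hF⟩ | ⟨hsp, Z, hlb, hZ⟩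
  · left
    refine ⟨r, Finset.mem_toList.1 hr, q, hq, F', ?_, hlb, hsucc, hlt, hF⟩
    simpa [spL] using hsp
  · right
    exact ⟨hsp, Z, hlb, fun r' hr' => Finset.mem_toList.1 (hZ r' hr')⟩

lemma step_lt {u v : ℕ} (h : (GG S ext).step u v) : u < v := by
  rcases h with ⟨lab, he⟩
  rw [GG_edges] at he
  rcases (mem_edgesG S ext).1 he with ⟨hu, a, δ, F, hsp, _, rfl⟩
  rcases spL_char S hu with ⟨r, _, q, _, F0, hsp0, _, h1, h2, _⟩ | ⟨hnone, _⟩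
  · rw [hsp0] at hsp
    obtain ⟨rfl, rfl, rfl⟩ : q.1 = a ∧ q.2 = δ ∧ F0 = F := by simpa [Prod.ext_iff] using hsp
    split <;> omega
  · rw [hnone] at hsp; cases hsp

lemma isDG : (GG S ext).IsDG S ext := by
  have hn : 0 < nn S := by
    rw [nn, lbL, buildLbl_length]; omega
  refine ⟨hn, ?_, ?_, ?_⟩
  · rintro ⟨u, lab, w⟩ he
    rw [GG_edges] at he
    rcases (mem_edgesG S ext).1 he with ⟨hu, a, δ, F, hsp, _, rfl⟩
    refine ⟨hu, ?_⟩
    show (if lab = some δ then u + 1 else F) < nn S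
    rcases spL_char S hu with ⟨r, _, q, _, F0, hsp0, _, h1, h2, h3⟩ | ⟨hnone, _⟩
    · rw [hsp0] at hsp
      obtain ⟨rfl, rfl, rfl⟩ : q.1 = a ∧ q.2 = δ ∧ F0 = F := by
        simpa [Prod.ext_iff] using hsp
      split <;> omega
    · rw [hnone] at hsp; cases hsp
  · intro v hv
    have hlt : Relation.TransGen (fun a b : ℕ => a < b) v v :=
      Relation.TransGen.mono (fun a b h => step_lt S ext h) v v hv
    have key : ∀ a b : ℕ, Relation.TransGen (fun x y : ℕ => x < y) a b → a < b := by
      intro a b h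
      induction h with
      | single h => exact h
      | tail _ h ih => exact lt_trans ih h
    exact lt_irrefl v (key v v hlt)
  · intro v hv
    rcases spL_char S hv with
      ⟨r, hr, q, hq, F, hsp, hlb, hsucc, hltF, hF⟩ | ⟨hnone, Z, hlb, hZ⟩
    · have hnt : ¬ (GG S ext).IsTerminal v := by
        intro ht
        have he : ((v, some q.2, if (some q.2 : Option ℕ) = some q.2 then v + 1 else F) :
            ℕ × Option ℕ × ℕ) ∈ edgesG S ext :=
          (mem_edgesG S ext).2 ⟨hv, q.1, q.2, F, hsp, some_mem_allowed S ext hr hq, rfl⟩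
        exact ht _ he rfl
      rw [if_neg hnt]
      refine ⟨q.1, hlb, ?_, ?_, ?_⟩
      · exact Finset.mem_biUnion.2 ⟨r, hr, Finset.mem_image.2 ⟨q, hq, rfl⟩⟩
      · intro lab
        constructor
        · rintro ⟨w, hw⟩
          rcases (mem_edgesG S ext).1 hw with ⟨_, a, δ, F0, hsp0, hlab, _⟩
          rw [hsp] at hsp0
          obtain ⟨h1, _, _⟩ : q.1 = a ∧ q.2 = δ ∧ F = F0 := by
            simpa [Prod.ext_iff] using hsp0
          rw [h1]; exact hlab
        · intro hlab
          exact ⟨_, (mem_edgesG S ext).2 ⟨hv, q.1, q.2, F, hsp, hlab, rfl⟩⟩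
      · intro lab w w' h1 h2
        rcases (mem_edgesG S ext).1 h1 with ⟨_, a, δ, F0, hsp0, _, rfl⟩
        rcases (mem_edgesG S ext).1 h2 with ⟨_, a', δ', F0', hsp0', _, rfl⟩
        rw [hsp0] at hsp0'
        obtain ⟨-, rfl, rfl⟩ : a = a' ∧ δ = δ' ∧ F0 = F0' := by
          simpa [Prod.ext_iff] using hsp0'
        rfl
    · have ht : (GG S ext).IsTerminal v := by
        rintro ⟨u, lab, w⟩ he h
        simp only at h
        subst h
        rcases (mem_edgesG S ext).1 he with ⟨_, a, δ, F, hsp, _, _⟩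
        rw [hnone] at hsp; cases hsp
      rw [if_pos ht]
      exact ⟨Z, hlb, hZ⟩

lemma chain_none {v : ℕ} (hnone : (spL S).getD v none = none) :
    ∀ {p : List (ℕ × Option ℕ)} {t : ℕ}, (GG S ext).chainFrom v p t → p = [] ∧ t = v := by
  intro p t h
  cases p with
  | nil => exact ⟨rfl, h.symm⟩
  | cons x rest =>
      obtain ⟨_, w, hw, _⟩ := h
      rcases (mem_edgesG S ext).1 hw with ⟨_, a, δ, F, hsp, _, _⟩
      rw [hnone] at hsp; cases hsp

lemma pathEqs_cons (G : DGraph) (x : ℕ × Option ℕ) (p : List (ℕ × Option ℕ)) (a : ℕ)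
    (h : G.label x.1 = Sum.inl a) :
    G.pathEqs (x :: p) = insert (a, x.2) (G.pathEqs p) := by
  simp [DGraph.pathEqs, List.filterMap_cons, h]

def ConclP (l : List Rule) (E : Finset (ℕ × Option ℕ)) (t : ℕ) : Prop :=
  (∃ r' ∈ l, (GG S ext).termSet t = {r'} ∧
      ∀ q ∈ r'.K, ((q.1, some q.2) : ℕ × Option ℕ) ∈ E) ∨
  ((GG S ext).termSet t = ∅ ∧
      ∀ r' ∈ l, ∃ q ∈ r'.K, ∃ lab, ((q.1, lab) : ℕ × Option ℕ) ∈ E ∧ lab ≠ some q.2)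

lemma ConclP_mono {l : List Rule} {E E' : Finset (ℕ × Option ℕ)} {t : ℕ}
    (hE : E ⊆ E') : ConclP S ext l E t → ConclP S ext l E' t := by
  rintro (⟨r', h1, h2, h3⟩ | ⟨h1, h2⟩)
  · exact Or.inl ⟨r', h1, h2, fun q hq => hE (h3 q hq)⟩
  · refine Or.inr ⟨h1, fun r' hr' => ?_⟩
    obtain ⟨q, hq, lab, hmem, hne⟩ := h2 r' hr'
    exact ⟨q, hq, lab, hE hmem, hne⟩

lemma inner (r : Rule) (hrS : r ∈ S) (rest : List Rule) (F : ℕ)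
    (hrest : ∀ p t, (GG S ext).chainFrom F p t → (GG S ext).IsTerminal t →
      ConclP S ext rest ((GG S ext).pathEqs p) t) :
    ∀ (es : List (ℕ × ℕ)) (v : ℕ),
      (∀ q ∈ es, q ∈ r.K) →
      (∀ i q, es[i]? = some q →
        (spL S).getD (v + i) none = some (q.1, q.2, F) ∧
        (lbL S).getD (v + i) (Sum.inr ∅) = Sum.inl q.1) →
      (spL S).getD (v + es.length) none = none →
      (lbL S).getD (v + es.length) (Sum.inr ∅) = Sum.inr ({r} : Finset Rule) →
      v + es.length < nn S →
      ∀ p t, (GG S ext).chainFrom v p t → (GG S ext).IsTerminal t →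
        (t = v + es.length ∧ (GG S ext).termSet t = {r} ∧
          ∀ q ∈ es, ((q.1, some q.2) : ℕ × Option ℕ) ∈ (GG S ext).pathEqs p) ∨
        ((∃ q ∈ r.K, ∃ lab, ((q.1, lab) : ℕ × Option ℕ) ∈ (GG S ext).pathEqs p ∧
            lab ≠ some q.2) ∧
          ConclP S ext rest ((GG S ext).pathEqs p) t) := by
  intro es
  induction es with
  | nil =>
      intro v _ _ hspT hlbT _ p t hchain hterm
      obtain ⟨hp, ht⟩ := chain_none S ext (by simpa using hspT) hchain
      subst hp; subst ht
      left
      refine ⟨by simp, GG_termSet_of_lbl S ext (by simpa using hlbT), by simp⟩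
  | cons q es' ih =>
      intro v hesK hspec hspT hlbT hvn p t hchain hterm
      have h0 := hspec 0 q (by simp)
      rw [Nat.add_zero] at h0
      have hvlt : v < nn S := by
        have : v + (q :: es').length = v + es'.length + 1 := by simp; omega
        omega
      cases p with
      | nil =>
          have ht : v = t := hchain
          subst ht
          have he : ((v, some q.2, if (some q.2 : Option ℕ) = some q.2 then v + 1 else F) :
              ℕ × Option ℕ × ℕ) ∈ edgesG S ext :=
            (mem_edgesG S ext).2 ⟨hvlt, q.1, q.2, F, h0.1,
              some_mem_allowed S ext hrS (hesK q (List.mem_cons_self)), rfl⟩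
          exact absurd rfl (hterm _ he)
      | cons x p' =>
          obtain ⟨hx1, w, hw, hchain'⟩ := hchain
          rcases (mem_edgesG S ext).1 hw with ⟨_, a, δ, F0, hsp0, hlab, hwval⟩
          rw [h0.1] at hsp0
          obtain ⟨ha, hδ, hF0⟩ : q.1 = a ∧ q.2 = δ ∧ F = F0 := by
            simpa [Prod.ext_iff] using hsp0
          subst ha; subst hδ; subst hF0
          have hpe : (GG S ext).pathEqs (x :: p')
              = insert (q.1, x.2) ((GG S ext).pathEqs p') := by
            apply pathEqs_cons
            rw [GG_label, hx1]
            exact h0.2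
          by_cases hcase : x.2 = some q.2
          · -- success step
            rw [hcase, if_pos rfl] at hwval
            subst hwval
            have hspec' : ∀ i q', es'[i]? = some q' →
                (spL S).getD (v + 1 + i) none = some (q'.1, q'.2, F) ∧
                (lbL S).getD (v + 1 + i) (Sum.inr ∅) = Sum.inl q'.1 := by
              intro i q' hq'
              have := hspec (i + 1) q' (by simpa using hq')
              rwa [show v + (i + 1) = v + 1 + i by omega] at this
            have hspT' : (spL S).getD (v + 1 + es'.length) none = none := by
              rw [show v + 1 + es'.length = v + (q :: es').length by simp; omega]
              exact hspT
            have hlbT' : (lbL S).getD (v + 1 + es'.length) (Sum.inr ∅)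
                = Sum.inr ({r} : Finset Rule) := by
              rw [show v + 1 + es'.length = v + (q :: es').length by simp; omega]
              exact hlbT
            have hvn' : v + 1 + es'.length < nn S := by
              have : v + (q :: es').length = v + 1 + es'.length := by simp; omega
              omega
            rcases ih (v + 1) (fun q' hq' => hesK q' (List.mem_cons_of_mem q hq'))
                hspec' hspT' hlbT' hvn' p' t hchain' hterm with
              ⟨ht, hts, hall⟩ | ⟨hf, hc⟩
            · left
              refine ⟨by simp; omega, hts, ?_⟩
              intro q'' hq''
              rw [hpe]
              rcases List.mem_cons.1 hq'' with h | h
              · subst h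
                rw [← hcase]
                exact Finset.mem_insert_self _ _
              · exact Finset.mem_insert_of_mem (hall q'' h)
            · right
              rw [hpe]
              obtain ⟨qf, hqf, labf, hmf, hnef⟩ := hf
              exact ⟨⟨qf, hqf, labf, Finset.mem_insert_of_mem hmf, hnef⟩,
                ConclP_mono S ext (Finset.subset_insert _ _) hc⟩
          · -- fail step
            rw [if_neg hcase] at hwval
            subst hwval
            right
            rw [hpe]
            refine ⟨⟨q, hesK q (List.mem_cons_self), x.2,
              Finset.mem_insert_self _ _, hcase⟩, ?_⟩
            exact ConclP_mono S ext (Finset.subset_insert _ _)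
              (hrest p' t hchain' hterm)

lemma master : ∀ (l : List Rule) (base : ℕ),
    (∀ r ∈ l, r ∈ S) →
    (∀ i, i < (buildLbl l).length →
      (spL S).getD (base + i) none = (buildSpec base l).getD i none ∧
      (lbL S).getD (base + i) (Sum.inr ∅) = (buildLbl l).getD i (Sum.inr ∅)) →
    base + (buildLbl l).length = nn S →
    ∀ p t, (GG S ext).chainFrom base p t → (GG S ext).IsTerminal t →
      ConclP S ext l ((GG S ext).pathEqs p) t := by
  intro l
  induction l with
  | nil =>
      intro base _ hagree _ p t hchain _
      have h0 := hagree 0 (by simp [buildLbl])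
      rw [Nat.add_zero] at h0
      have hsp : (spL S).getD base none = none := by
        rw [h0.1]; simp [buildSpec]
      have hlb : (lbL S).getD base (Sum.inr ∅) = Sum.inr ∅ := by
        rw [h0.2]; simp [buildLbl]
      obtain ⟨hp, ht⟩ := chain_none S ext hsp hchain
      subst hp; subst ht
      right
      exact ⟨GG_termSet_of_lbl S ext hlb, by simp⟩
  | cons r rest ih =>
      intro base hsub hagree hlen p t hchain hterm
      have hm : r.K.toList.length = r.len := by simp [Rule.len, Finset.length_toList]
      have hpos : 0 < (buildLbl rest).length := by rw [buildLbl_length]; omega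
      have hlenc : (buildLbl (r :: rest)).length = r.len + 1 + (buildLbl rest).length := by
        simp [buildLbl, hm]; omega
      -- spec for the equation nodes of r
      have hspec : ∀ i q, r.K.toList[i]? = some q →
          (spL S).getD (base + i) none = some (q.1, q.2, base + r.len + 1) ∧
          (lbL S).getD (base + i) (Sum.inr ∅) = Sum.inl q.1 := by
        intro i q hq
        obtain ⟨hi, hget⟩ := List.getElem?_eq_some_iff.1 hq
        have hagr := hagree i (by omega)
        constructor
        · rw [hagr.1, buildSpec, List.getD_eq_getElem?_getD, List.getElem?_append_left
            (by simpa [List.length_map] using hi), List.getElem?_map,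
            List.getElem?_eq_getElem hi, hget]
          simp
        · rw [hagr.2, buildLbl, List.getD_eq_getElem?_getD, List.getElem?_append_left
            (by simpa [List.length_map] using hi), List.getElem?_map,
            List.getElem?_eq_getElem hi, hget]
          simp
      -- the success terminal of r
      have hagrT := hagree r.len (by omega)
      have hspT : (spL S).getD (base + r.len) none = none := by
        rw [hagrT.1, buildSpec, List.getD_eq_getElem?_getD, List.getElem?_append_right
          (by simp [List.length_map, hm])]
        simp [List.length_map, hm]
      have hlbT : (lbL S).getD (base + r.len) (Sum.inr ∅) = Sum.inr ({r} : Finset Rule) := by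
        rw [hagrT.2, buildLbl, List.getD_eq_getElem?_getD, List.getElem?_append_right
          (by simp [List.length_map, hm])]
        simp [List.length_map, hm]
      -- the rest of the system
      have hrest : ∀ p t, (GG S ext).chainFrom (base + r.len + 1) p t →
          (GG S ext).IsTerminal t → ConclP S ext rest ((GG S ext).pathEqs p) t := by
        apply ih (base + r.len + 1) (fun r' hr' => hsub r' (List.mem_cons_of_mem r hr'))
        · intro i hi
          have hagr := hagree (r.len + 1 + i) (by omega)
          have e1 : base + (r.len + 1 + i) = base + r.len + 1 + i := by omega
          rw [e1] at hagr
          have hspEq : (buildSpec base (r :: rest)).getD (r.len + 1 + i) none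
              = (buildSpec (base + r.len + 1) rest).getD i none := by
            rw [buildSpec, List.getD_eq_getElem?_getD, List.getElem?_append_right
              (by simp [List.length_map, hm]; omega)]
            rw [List.getD_eq_getElem?_getD]
            congr 1
            rw [show r.len + 1 + i - (r.K.toList.map fun q =>
                some (q.1, q.2, base + r.len + 1)).length = i + 1 by
              simp [List.length_map, hm]; omega]
            exact List.getElem?_cons_succ
          have hlbEq : (buildLbl (r :: rest)).getD (r.len + 1 + i) (Sum.inr ∅)
              = (buildLbl rest).getD i (Sum.inr ∅) := by
            rw [buildLbl, List.getD_eq_getElem?_getD, List.getElem?_append_right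
              (by simp [List.length_map, hm]; omega)]
            rw [List.getD_eq_getElem?_getD]
            congr 1
            rw [show r.len + 1 + i - (r.K.toList.map fun q => Sum.inl q.1).length
                = i + 1 by simp [List.length_map, hm]; omega]
            exact List.getElem?_cons_succ
          exact ⟨by rw [hagr.1, hspEq], by rw [hagr.2, hlbEq]⟩
        · omega
      have hres := inner S ext r (hsub r (List.mem_cons_self)) rest
        (base + r.len + 1) hrest r.K.toList base
        (fun q hq => Finset.mem_toList.1 hq) hspec
        (by rw [hm]; exact hspT) (by rw [hm]; exact hlbT)
        (by rw [hm]; omega) p t hchain hterm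
      rcases hres with ⟨ht, hts, hall⟩ | ⟨hf, hc⟩
      · exact Or.inl ⟨r, List.mem_cons_self, hts,
          fun q hq => hall q (Finset.mem_toList.2 hq)⟩
      · rcases hc with ⟨r', hr', hts, hall⟩ | ⟨hts, hall⟩
        · exact Or.inl ⟨r', List.mem_cons_of_mem r hr', hts, hall⟩
        · refine Or.inr ⟨hts, ?_⟩
          intro r'' hr''
          rcases List.mem_cons.1 hr'' with h | h
          · subst h; exact hf
          · exact hall r'' h

lemma solvesSR : (GG S ext).SolvesSR S := by
  intro p t hcp _
  obtain ⟨hchain, hterm, _⟩ := hcp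
  have hconcl : ConclP S ext S.toList ((GG S ext).pathEqs p) t := by
    refine master S ext S.toList 0 (fun r hr => Finset.mem_toList.1 hr) ?_ ?_ p t hchain hterm
    · intro i _
      constructor
      · rw [Nat.zero_add]; rfl
      · rw [Nat.zero_add]; rfl
    · rw [Nat.zero_add]; rfl
  rcases hconcl with ⟨r', _, hts, hall⟩ | ⟨hts, hall⟩
  · constructor
    · intro r hr
      rw [hts, Finset.mem_singleton] at hr
      subst hr
      intro x hx
      rcases Finset.mem_image.1 hx with ⟨q, hq, rfl⟩
      exact hall q hq
    · intro h
      rw [hts] at h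
      exact absurd h (Finset.singleton_ne_empty r')
  · constructor
    · intro r hr
      rw [hts] at hr
      exact absurd hr (Finset.notMem_empty r)
    · intro _ r hrS hcons
      obtain ⟨q, hqK, lab, hmem, hne⟩ := hall r (Finset.mem_toList.2 hrS)
      have h1 : ((q.1, some q.2) : ℕ × Option ℕ) ∈ liftK r.K ∪ (GG S ext).pathEqs p :=
        Finset.mem_union_left _ (Finset.mem_image.2 ⟨q, hqK, rfl⟩)
      have h2 : ((q.1, lab) : ℕ × Option ℕ) ∈ liftK r.K ∪ (GG S ext).pathEqs p :=
        Finset.mem_union_right _ hmem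
      exact hne (hcons _ h1 _ h2 rfl).symm

lemma size_GG : (GG S ext).size = (∑ r ∈ S, (r.len + 1)) + 1 := by
  show nn S = _
  rw [nn, lbL, buildLbl_length, Finset.sum_map_toList]

end Theorem2Construction

/-- Theorem 2(a) (construction): for C ∈ {SR, ESR} there is an acyclic decision graph
over S solving C(S) with at most 1 + Σ_{r∈S}(length(r) + 1) nodes; in particular
L^DG_C(S) ≤ 1 + Σ_{r∈S}(length(r) + 1). -/
theorem statement_10 (S : Finset Rule) (hS : S.Nonempty) (hwf : ∀ r ∈ S, r.WF) :
    (∃ G : DGraph, G.IsDG S false ∧ G.SolvesSR S ∧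
      G.size ≤ 1 + ∑ r ∈ S, (r.len + 1)) ∧
    (∃ G : DGraph, G.IsDG S true ∧ G.SolvesSR S ∧
      G.size ≤ 1 + ∑ r ∈ S, (r.len + 1)) ∧
    LDG_SR S ≤ 1 + ∑ r ∈ S, (r.len + 1) ∧
    LDG_ESR S ≤ 1 + ∑ r ∈ S, (r.len + 1) := by
  have hbound : ∀ ext : Bool, (GG S ext).size ≤ 1 + ∑ r ∈ S, (r.len + 1) := by
    intro ext
    rw [size_GG]
    omega
  refine ⟨⟨GG S false, isDG S false, solvesSR S false, hbound false⟩,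
    ⟨GG S true, isDG S true, solvesSR S true, hbound true⟩, ?_, ?_⟩
  · exact le_trans (Nat.sInf_le ⟨GG S false, isDG S false, solvesSR S false, rfl⟩)
      (hbound false)
  · exact le_trans (Nat.sInf_le ⟨GG S true, isDG S true, solvesSR S true, rfl⟩)
      (hbound true)

end DRS

end
end
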